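/- arXiv:math/0305180 — 5 statements merged into one kernel-verified Lean document; each statement's English description precedes it below -/
import Mathlib

section
/- For all l, i ∈ {1,…,n−1} and every m ∈ ℕ, the operators on A satisfy the commutator identity [d_l, η_i^m] = m · δ_{l,i} · η_i^{m−1} ∘ ((1−m)·id + ζ_i), where δ_{l,i} is the Kronecker delta (and for m = 0 both sides are 0). -/
open MvPolynomial LieAlgebra LieAlgebra.SpecialLinear

/-- Index set for the variables `x_{i,j}`, `1 ≤ j < i ≤ n`. -/
abbrev XIdx (n : ℕ) := {p : ℕ × ℕ // 1 ≤ p.2 ∧ p.2 < p.1 ∧ p.1 ≤ n}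

/-- The polynomial algebra `A = ℂ[x_{i,j} : 1 ≤ j < i ≤ n]`. -/
abbrev PolyA (n : ℕ) := MvPolynomial (XIdx n) ℂ

/-- Multiplication by `x_{i,j}` as a linear operator on `A`. -/
noncomputable def mulX (n i j : ℕ) : Module.End ℂ (PolyA n) :=
  if h : 1 ≤ j ∧ j < i ∧ i ≤ n then
    LinearMap.mulLeft ℂ (X (⟨(i, j), h⟩ : XIdx n)) else 0

/-- Partial derivative `∂_{i,j}` as a linear operator on `A`. -/
noncomputable def pd (n i j : ℕ) : Module.End ℂ (PolyA n) :=
  if h : 1 ≤ j ∧ j < i ∧ i ≤ n then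
    (pderiv (⟨(i, j), h⟩ : XIdx n)).toLinearMap else 0

/-- The operator `d_i`. -/
noncomputable def dOp (n : ℕ) (lam : ℕ → ℂ) (i : ℕ) : Module.End ℂ (PolyA n) :=
  (lam i • (1 : Module.End ℂ (PolyA n))
      - ∑ j ∈ Finset.Icc (i+1) n, mulX n j i * pd n j i
      + ∑ j ∈ Finset.Icc (i+2) n, mulX n j (i+1) * pd n j (i+1)) * pd n (i+1) i
    + ∑ j ∈ Finset.Icc 1 (i-1), mulX n i j * pd n (i+1) j
    - ∑ j ∈ Finset.Icc (i+2) n, mulX n j (i+1) * pd n j i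

/-- The operator `η_i`. -/
noncomputable def etaOp (n : ℕ) (i : ℕ) : Module.End ℂ (PolyA n) :=
  mulX n (i+1) i + ∑ j ∈ Finset.Icc 1 (i-1), mulX n (i+1) j * pd n i j

/-- The operator `ζ_i`. -/
noncomputable def zetaOp (n : ℕ) (lam : ℕ → ℂ) (i : ℕ) : Module.End ℂ (PolyA n) :=
  lam i • (1 : Module.End ℂ (PolyA n))
    + ∑ p ∈ Finset.Icc 1 (i-1), (mulX n i p * pd n i p - mulX n (i+1) p * pd n (i+1) p)
    + ∑ j ∈ Finset.Icc (i+2) n, (mulX n j (i+1) * pd n j (i+1) - mulX n j i * pd n j i)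
    - (2 : ℂ) • (mulX n (i+1) i * pd n (i+1) i)

/-- The matrix unit `E_{i,j}` (1-based indices) as an element of `sl(n,ℂ)`. -/
noncomputable def slE (n i j : ℕ) : sl (Fin n) ℂ :=
  if h : i ≠ j ∧ 1 ≤ i ∧ i ≤ n ∧ 1 ≤ j ∧ j ≤ n then
    have hi : i - 1 < n := by omega
    have hj : j - 1 < n := by omega
    LieAlgebra.SpecialLinear.single (⟨i - 1, hi⟩ : Fin n) (⟨j - 1, hj⟩ : Fin n)
      (by simp only [ne_eq, Fin.mk.injEq]; omega) (1 : ℂ)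
  else 0

/-- `h_i = E_{i,i} - E_{i+1,i+1}` (1-based index) as an element of `sl(n,ℂ)`. -/
noncomputable def slH (n i : ℕ) : sl (Fin n) ℂ :=
  if h : 1 ≤ i ∧ i + 1 ≤ n then
    have hi : i - 1 < n := by omega
    have hi' : i < n := by omega
    ⟨Matrix.single (⟨i - 1, hi⟩ : Fin n) (⟨i - 1, hi⟩ : Fin n) (1 : ℂ)
        - Matrix.single (⟨i, hi'⟩ : Fin n) (⟨i, hi'⟩ : Fin n) (1 : ℂ),
      LinearMap.mem_ker.2 (by simp)⟩
  else 0

namespace St1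

lemma pderiv_comm'' {σ R : Type*} [CommSemiring R] [DecidableEq σ] (i j : σ) (p : MvPolynomial σ R) :
    pderiv i (pderiv j p) = pderiv j (pderiv i p) := by
  induction p using MvPolynomial.induction_on with
  | C a => simp
  | add p q hp hq => simp [hp, hq]
  | mul_X p k hp =>
      simp only [pderiv_mul, pderiv_X, map_add, hp, Pi.single_apply, apply_ite (pderiv i),
        apply_ite (pderiv j), pderiv_one, map_zero, ite_self]
      ring

noncomputable def dl (n a b c d : ℕ) : Module.End ℂ (PolyA n) :=
  if a = c ∧ b = d ∧ 1 ≤ b ∧ b < a ∧ a ≤ n then 1 else 0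

variable {n : ℕ}

lemma pd_pd (a b c d : ℕ) : pd n a b * pd n c d = pd n c d * pd n a b := by
  unfold pd
  split_ifs with h1 h2 h2
  · exact LinearMap.ext fun p => pderiv_comm'' _ _ p
  · simp
  · simp
  · simp

lemma mulX_mulX (a b c d : ℕ) : mulX n a b * mulX n c d = mulX n c d * mulX n a b := by
  unfold mulX
  split_ifs with h1 h2 h2
  · refine LinearMap.ext fun p => ?_
    simp only [Module.End.mul_apply, LinearMap.mulLeft_apply]
    ring
  · simp
  · simp
  · simp

lemma pd_mulX (a b c d : ℕ) :
    pd n a b * mulX n c d = mulX n c d * pd n a b + dl n a b c d := by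
  unfold pd mulX dl
  by_cases hA : 1 ≤ b ∧ b < a ∧ a ≤ n
  · by_cases hC : 1 ≤ d ∧ d < c ∧ c ≤ n
    · rw [dif_pos hA, dif_pos hC]
      refine LinearMap.ext fun p => ?_
      by_cases hh : a = c ∧ b = d
      · obtain ⟨rfl, rfl⟩ := hh
        rw [if_pos ⟨rfl, rfl, hA⟩]
        simp only [Module.End.mul_apply, LinearMap.add_apply, LinearMap.mulLeft_apply,
          AlgHom.toLinearMap_apply, Derivation.coeFn_coe, Module.End.one_apply]
        simp only [pderiv_mul, pderiv_X_self]
        ring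
      · have hne : (⟨(c,d), hC⟩ : XIdx n) ≠ ⟨(a,b), hA⟩ := by
          intro he
          have := Subtype.ext_iff.mp he
          exact hh ⟨(congrArg Prod.fst this).symm, (congrArg Prod.snd this).symm⟩
        rw [if_neg (fun h => hh ⟨h.1, h.2.1⟩)]
        simp only [Module.End.mul_apply, LinearMap.add_apply, LinearMap.mulLeft_apply,
          AlgHom.toLinearMap_apply, Derivation.coeFn_coe, LinearMap.zero_apply, add_zero]
        simp only [pderiv_mul, pderiv_X_of_ne hne]
        ring
    · rw [dif_pos hA, dif_neg hC, if_neg (by rintro ⟨rfl, rfl, h⟩; exact hC h)]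
      simp
  · rw [dif_neg hA, if_neg (fun h => hA h.2.2)]
    by_cases hC : 1 ≤ d ∧ d < c ∧ c ≤ n
    · rw [dif_pos hC]; simp
    · rw [dif_neg hC]; simp

lemma dl_comm (a b c d : ℕ) (T : Module.End ℂ (PolyA n)) :
    T * dl n a b c d = dl n a b c d * T := by
  unfold dl; split_ifs <;> simp

/-- commutator -/
noncomputable def br (A B : Module.End ℂ (PolyA n)) : Module.End ℂ (PolyA n) := A * B - B * A

lemma br_add_right (A B C : Module.End ℂ (PolyA n)) : br A (B + C) = br A B + br A C := by
  simp only [br, mul_add, add_mul]; abel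

lemma br_sum_right {α : Type*} (s : Finset α) (A : Module.End ℂ (PolyA n))
    (f : α → Module.End ℂ (PolyA n)) : br A (∑ j ∈ s, f j) = ∑ j ∈ s, br A (f j) := by
  simp only [br, Finset.mul_sum, Finset.sum_mul, ← Finset.sum_sub_distrib]

lemma br_sum_left {α : Type*} (s : Finset α) (B : Module.End ℂ (PolyA n))
    (f : α → Module.End ℂ (PolyA n)) : br (∑ j ∈ s, f j) B = ∑ j ∈ s, br (f j) B := by
  simp only [br, Finset.mul_sum, Finset.sum_mul, ← Finset.sum_sub_distrib]

lemma br_sub_left (A B C : Module.End ℂ (PolyA n)) : br (A - B) C = br A C - br B C := by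
  simp only [br, sub_mul, mul_sub]; abel

lemma br_add_left (A B C : Module.End ℂ (PolyA n)) : br (A + B) C = br A C + br B C := by
  simp only [br, add_mul, mul_add]; abel

lemma br_smul_left (c : ℂ) (A B : Module.End ℂ (PolyA n)) : br (c • A) B = c • br A B := by
  simp only [br, smul_mul_assoc, mul_smul_comm, smul_sub]

lemma br_mul_right (A B C : Module.End ℂ (PolyA n)) : br A (B * C) = br A B * C + B * br A C := by
  simp only [br, sub_mul, mul_sub, mul_assoc]; abel

lemma br_mul_left (A B C : Module.End ℂ (PolyA n)) : br (A * B) C = A * br B C + br A C * B := by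
  simp only [br, sub_mul, mul_sub, mul_assoc]; abel

lemma br_antisym (A B : Module.End ℂ (PolyA n)) : br A B = - br B A := by
  simp only [br]; abel

lemma br_pd_pd (a b c d : ℕ) : br (pd n a b) (pd n c d) = 0 := by
  simp [br, pd_pd a b c d]

lemma br_X_X (a b c d : ℕ) : br (mulX n a b) (mulX n c d) = 0 := by
  simp [br, mulX_mulX a b c d]

lemma br_pd_X (a b c d : ℕ) : br (pd n a b) (mulX n c d) = dl n a b c d := by
  simp [br, pd_mulX a b c d]

lemma dl_mul_shift (a b c d : ℕ) (A B : Module.End ℂ (PolyA n)) :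
    A * (dl n a b c d * B) = dl n a b c d * (A * B) := by
  rw [← mul_assoc, dl_comm, mul_assoc]

lemma mulX_mulX_shift (a b c d : ℕ) (D : Module.End ℂ (PolyA n)) :
    mulX n a b * (mulX n c d * D) = mulX n c d * (mulX n a b * D) := by
  rw [← mul_assoc, mulX_mulX a b c d, mul_assoc]

lemma pd_pd_shift (a b c d : ℕ) (D : Module.End ℂ (PolyA n)) :
    pd n a b * (pd n c d * D) = pd n c d * (pd n a b * D) := by
  rw [← mul_assoc, pd_pd a b c d, mul_assoc]

/-- The workhorse: normal-order `pd * (mulX * D)`. -/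
lemma reorderH (a b c d : ℕ) (D : Module.End ℂ (PolyA n)) :
    pd n a b * (mulX n c d * D) = mulX n c d * (pd n a b * D) + dl n a b c d * D := by
  rw [← mul_assoc, pd_mulX, add_mul, mul_assoc]

lemma br_pd_Xpd (a b c d e f : ℕ) :
    br (pd n a b) (mulX n c d * pd n e f) = dl n a b c d * pd n e f := by
  simp only [br, mul_assoc, mul_add, add_mul, pd_mulX, reorderH, dl_mul_shift, dl_comm]
  rw [pd_pd a b e f]
  abel

lemma br_Xpd_X (a b c d e f : ℕ) :
    br (mulX n a b * pd n c d) (mulX n e f) = dl n c d e f * mulX n a b := by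
  simp only [br, mul_assoc, mul_add, add_mul, pd_mulX, reorderH, dl_mul_shift, dl_comm]
  rw [mulX_mulX_shift a b e f]
  abel

lemma br_Xpd_Xpd (a b c d e f g h : ℕ) :
    br (mulX n a b * pd n c d) (mulX n e f * pd n g h)
      = dl n c d e f * (mulX n a b * pd n g h) - dl n g h a b * (mulX n e f * pd n c d) := by
  simp only [br, mul_assoc, mul_add, add_mul, pd_mulX, reorderH, dl_mul_shift, dl_comm]
  rw [mulX_mulX_shift a b e f, pd_pd g h c d]
  abel

lemma br_Xpdpd_X (a b c d e f g h : ℕ) :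
    br (mulX n a b * pd n c d * pd n e f) (mulX n g h)
      = dl n c d g h * (mulX n a b * pd n e f) + dl n e f g h * (mulX n a b * pd n c d) := by
  simp only [br, mul_assoc, mul_add, add_mul, pd_mulX, reorderH, dl_mul_shift, dl_comm]
  rw [mulX_mulX_shift a b g h]
  abel

lemma br_Xpdpd_Xpd (a b c d e f g h p q : ℕ) :
    br (mulX n a b * pd n c d * pd n e f) (mulX n g h * pd n p q)
      = dl n c d g h * (mulX n a b * (pd n e f * pd n p q))
        + dl n e f g h * (mulX n a b * (pd n c d * pd n p q))
        - dl n p q a b * (mulX n g h * (pd n c d * pd n e f)) := by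
  simp only [br, mul_assoc, mul_add, add_mul, pd_mulX, reorderH, dl_mul_shift, dl_comm]
  rw [mulX_mulX_shift a b g h, pd_pd_shift p q c d, pd_pd p q e f]
  abel

lemma dl_eval_pos {a b c d : ℕ} (h : 1 ≤ b ∧ b < a ∧ a ≤ n) (ha : a = c) (hb : b = d) :
    dl n a b c d = 1 := by
  unfold dl; rw [if_pos ⟨ha, hb, h⟩]

lemma dl_eval_zero {a b c d : ℕ} (h : ¬(a = c ∧ b = d ∧ 1 ≤ b ∧ b < a ∧ a ≤ n)) :
    dl n a b c d = 0 := by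
  unfold dl; rw [if_neg h]

variable {n : ℕ}

lemma chunk1 (hn : 2 ≤ n) (l i : ℕ) (hl1 : 1 ≤ l) (hl2 : l ≤ n - 1) (hi1 : 1 ≤ i)
    (hi2 : i ≤ n - 1) :
    br (pd n (l+1) l) (etaOp n i) = if l = i then (1 : Module.End ℂ (PolyA n)) else 0 := by
  rw [etaOp, br_add_right, br_pd_X, br_sum_right]
  have h0 : ∑ k ∈ Finset.Icc 1 (i-1), br (pd n (l+1) l) (mulX n (i+1) k * pd n i k) = 0 := by
    apply Finset.sum_eq_zero
    intro k hk
    rw [Finset.mem_Icc] at hk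
    rw [br_pd_Xpd, dl_eval_zero (by omega), zero_mul]
  rw [h0, add_zero]
  by_cases hli : l = i
  · subst hli
    rw [dl_eval_pos ⟨hl1, by omega, by omega⟩ rfl rfl, if_pos rfl]
  · rw [dl_eval_zero (by omega), if_neg hli]

lemma chunk2 (hn : 2 ≤ n) (l i : ℕ) (hl1 : 1 ≤ l) (hl2 : l ≤ n - 1) (hi1 : 1 ≤ i)
    (hi2 : i ≤ n - 1) :
    br ((∑ j ∈ Finset.Icc (l+1) n, mulX n j l * pd n j l) * pd n (l+1) l) (etaOp n i)
      = if l = i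
        then mulX n (i+1) i * pd n (i+1) i + ∑ j ∈ Finset.Icc (i+1) n, mulX n j i * pd n j i
        else 0 := by
  rw [Finset.sum_mul, etaOp]
  by_cases hli : l = i
  · subst hli
    rw [if_pos rfl, br_sum_left]
    have key : ∀ j ∈ Finset.Icc (l+1) n,
        br (mulX n j l * pd n j l * pd n (l+1) l)
           (mulX n (l+1) l + ∑ k ∈ Finset.Icc 1 (l-1), mulX n (l+1) k * pd n l k)
        = (if j = l+1 then mulX n j l * pd n (l+1) l else 0) + mulX n j l * pd n j l := by
      intro j hj
      rw [Finset.mem_Icc] at hj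
      rw [br_add_right, br_Xpdpd_X, br_sum_right]
      have h0 : ∑ k ∈ Finset.Icc 1 (l-1),
          br (mulX n j l * pd n j l * pd n (l+1) l) (mulX n (l+1) k * pd n l k) = 0 := by
        apply Finset.sum_eq_zero
        intro k hk
        rw [Finset.mem_Icc] at hk
        have e1 : dl n j l (l+1) k = 0 := dl_eval_zero (by omega)
        have e2 : dl n (l+1) l (l+1) k = 0 := dl_eval_zero (by omega)
        have e3 : dl n l k j l = 0 := dl_eval_zero (by omega)
        rw [br_Xpdpd_Xpd, e1, e2, e3, zero_mul, zero_mul, zero_mul, add_zero, sub_zero]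
      rw [h0, add_zero]
      have f2 : dl n (l+1) l (l+1) l = 1 := dl_eval_pos ⟨hi1, by omega, by omega⟩ rfl rfl
      rw [f2, one_mul]
      by_cases hj2 : j = l+1
      · subst hj2
        rw [dl_eval_pos ⟨hi1, by omega, by omega⟩ rfl rfl, one_mul, if_pos rfl]
      · rw [dl_eval_zero (by omega), zero_mul, if_neg hj2]
    rw [Finset.sum_congr rfl key, Finset.sum_add_distrib,
      Finset.sum_ite_eq' (Finset.Icc (l+1) n) (l+1) (fun j => mulX n j l * pd n (l+1) l),
      if_pos (by rw [Finset.mem_Icc]; omega)]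
  · rw [if_neg hli, br_sum_left]
    by_cases hlt : l < i
    · -- case l < i : cancellation of two cross terms
      have key : ∀ j ∈ Finset.Icc (l+1) n,
          br (mulX n j l * pd n j l * pd n (l+1) l)
             (mulX n (i+1) i + ∑ k ∈ Finset.Icc 1 (i-1), mulX n (i+1) k * pd n i k)
          = (if j = i+1 then mulX n j l * (pd n (l+1) l * pd n i l) else 0)
            - (if j = i then mulX n (i+1) l * (pd n j l * pd n (l+1) l) else 0) := by
        intro j hj
        rw [Finset.mem_Icc] at hj
        rw [br_add_right, br_Xpdpd_X, br_sum_right]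
        have e1 : dl n j l (i+1) i = 0 := dl_eval_zero (by omega)
        have e2 : dl n (l+1) l (i+1) i = 0 := dl_eval_zero (by omega)
        rw [e1, e2, zero_mul, zero_mul, add_zero, zero_add]
        have hBk : ∀ k ∈ Finset.Icc 1 (i-1),
            br (mulX n j l * pd n j l * pd n (l+1) l) (mulX n (i+1) k * pd n i k)
            = (if k = l then
                ((if j = i+1 then mulX n j l * (pd n (l+1) l * pd n i k) else 0)
                  - (if j = i then mulX n (i+1) k * (pd n j l * pd n (l+1) l) else 0))
               else 0) := by
          intro k hk
          rw [Finset.mem_Icc] at hk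
          rw [br_Xpdpd_Xpd]
          have e3 : dl n (l+1) l (i+1) k = 0 := dl_eval_zero (by omega)
          rw [e3, zero_mul, add_zero]
          by_cases hkl : k = l
          · subst hkl
            rw [if_pos rfl]
            by_cases hj1 : j = i+1
            · subst hj1
              rw [dl_eval_pos ⟨hl1, by omega, by omega⟩ rfl rfl, one_mul, if_pos rfl]
              have e4 : dl n i k (i+1) k = 0 := dl_eval_zero (by omega)
              rw [e4, zero_mul, if_neg (by omega)]
            · rw [dl_eval_zero (by omega), zero_mul, if_neg hj1, zero_sub, zero_sub]
              by_cases hj2 : j = i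
              · subst hj2
                rw [dl_eval_pos ⟨hk.1, by omega, by omega⟩ rfl rfl, one_mul, if_pos rfl]
              · rw [dl_eval_zero (by omega), zero_mul, if_neg hj2]
          · rw [if_neg hkl]
            have e4 : dl n j l (i+1) k = 0 := dl_eval_zero (by omega)
            have e5 : dl n i k j l = 0 := dl_eval_zero (by omega)
            rw [e4, e5, zero_mul, zero_mul, sub_zero]
        rw [Finset.sum_congr rfl hBk,
          Finset.sum_ite_eq' (Finset.Icc 1 (i-1)) l, if_pos (by rw [Finset.mem_Icc]; omega)]
      rw [Finset.sum_congr rfl key, Finset.sum_sub_distrib,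
        Finset.sum_ite_eq' (Finset.Icc (l+1) n) (i+1) (fun j => mulX n j l * (pd n (l+1) l * pd n i l)),
        Finset.sum_ite_eq' (Finset.Icc (l+1) n) i (fun j => mulX n (i+1) l * (pd n j l * pd n (l+1) l)),
        if_pos (by rw [Finset.mem_Icc]; omega), if_pos (by rw [Finset.mem_Icc]; omega),
        pd_pd (l+1) l i l, sub_self]
    · -- case l > i : everything vanishes
      apply Finset.sum_eq_zero
      intro j hj
      rw [Finset.mem_Icc] at hj
      rw [br_add_right, br_Xpdpd_X, br_sum_right]
      have e1 : dl n j l (i+1) i = 0 := dl_eval_zero (by omega)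
      have e2 : dl n (l+1) l (i+1) i = 0 := dl_eval_zero (by omega)
      rw [e1, e2, zero_mul, zero_mul, add_zero, zero_add]
      apply Finset.sum_eq_zero
      intro k hk
      rw [Finset.mem_Icc] at hk
      have e3 : dl n j l (i+1) k = 0 := dl_eval_zero (by omega)
      have e4 : dl n (l+1) l (i+1) k = 0 := dl_eval_zero (by omega)
      have e5 : dl n i k j l = 0 := dl_eval_zero (by omega)
      rw [br_Xpdpd_Xpd, e3, e4, e5, zero_mul, zero_mul, zero_mul, add_zero, sub_zero]


lemma chunk3 (hn : 2 ≤ n) (l i : ℕ) (hl1 : 1 ≤ l) (hl2 : l ≤ n - 1) (hi1 : 1 ≤ i)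
    (hi2 : i ≤ n - 1) :
    br ((∑ j ∈ Finset.Icc (l+2) n, mulX n j (l+1) * pd n j (l+1)) * pd n (l+1) l) (etaOp n i)
      = (if l + 1 = i then mulX n (i+1) i * pd n i l else 0)
        + (if l = i then ∑ j ∈ Finset.Icc (i+2) n, mulX n j (i+1) * pd n j (i+1) else 0) := by
  rw [Finset.sum_mul, etaOp, br_sum_left]
  by_cases hli : l = i
  · -- l = i
    subst hli
    rw [if_neg (by omega), if_pos rfl, zero_add]
    have key : ∀ j ∈ Finset.Icc (l+2) n,
        br (mulX n j (l+1) * pd n j (l+1) * pd n (l+1) l)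
           (mulX n (l+1) l + ∑ k ∈ Finset.Icc 1 (l-1), mulX n (l+1) k * pd n l k)
        = mulX n j (l+1) * pd n j (l+1) := by
      intro j hj
      rw [Finset.mem_Icc] at hj
      rw [br_add_right, br_Xpdpd_X, br_sum_right]
      have e1 : dl n j (l+1) (l+1) l = 0 := dl_eval_zero (by omega)
      have e2 : dl n (l+1) l (l+1) l = 1 := dl_eval_pos ⟨hl1, by omega, by omega⟩ rfl rfl
      rw [e1, e2, zero_mul, one_mul, zero_add]
      have h0 : ∑ k ∈ Finset.Icc 1 (l-1),
          br (mulX n j (l+1) * pd n j (l+1) * pd n (l+1) l) (mulX n (l+1) k * pd n l k) = 0 := by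
        apply Finset.sum_eq_zero
        intro k hk
        rw [Finset.mem_Icc] at hk
        have e3 : dl n j (l+1) (l+1) k = 0 := dl_eval_zero (by omega)
        have e4 : dl n (l+1) l (l+1) k = 0 := dl_eval_zero (by omega)
        have e5 : dl n l k j (l+1) = 0 := dl_eval_zero (by omega)
        rw [br_Xpdpd_Xpd, e3, e4, e5, zero_mul, zero_mul, zero_mul, add_zero, sub_zero]
      rw [h0, add_zero]
    rw [Finset.sum_congr rfl key]
  · rw [if_neg hli, add_zero]
    by_cases hl1i : l + 1 = i
    · -- l + 1 = i
      rw [if_pos hl1i]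
      obtain rfl : i = l + 1 := hl1i.symm
      simp only [show l+1+1 = l+2 from rfl, show l+1-1 = l from rfl]
      have key : ∀ j ∈ Finset.Icc (l+2) n,
          br (mulX n j (l+1) * pd n j (l+1) * pd n (l+1) l)
             (mulX n (l+2) (l+1) + ∑ k ∈ Finset.Icc 1 l, mulX n (l+2) k * pd n (l+1) k)
          = (if j = l+2 then mulX n j (l+1) * pd n (l+1) l else 0) := by
        intro j hj
        rw [Finset.mem_Icc] at hj
        rw [br_add_right, br_Xpdpd_X, br_sum_right]
        have e2 : dl n (l+1) l (l+2) (l+1) = 0 := dl_eval_zero (by omega)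
        rw [e2, zero_mul, add_zero]
        have h0 : ∑ k ∈ Finset.Icc 1 l,
            br (mulX n j (l+1) * pd n j (l+1) * pd n (l+1) l) (mulX n (l+2) k * pd n (l+1) k)
              = 0 := by
          apply Finset.sum_eq_zero
          intro k hk
          rw [Finset.mem_Icc] at hk
          have e3 : dl n j (l+1) (l+2) k = 0 := dl_eval_zero (by omega)
          have e4 : dl n (l+1) l (l+2) k = 0 := dl_eval_zero (by omega)
          have e5 : dl n (l+1) k j (l+1) = 0 := dl_eval_zero (by omega)
          rw [br_Xpdpd_Xpd, e3, e4, e5, zero_mul, zero_mul, zero_mul, add_zero, sub_zero]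
        rw [h0, add_zero]
        by_cases hj2 : j = l+2
        · subst hj2
          rw [dl_eval_pos ⟨by omega, by omega, by omega⟩ rfl rfl, one_mul, if_pos rfl]
        · rw [dl_eval_zero (by omega), zero_mul, if_neg hj2]
      rw [Finset.sum_congr rfl key,
        Finset.sum_ite_eq' (Finset.Icc (l+2) n) (l+2)
          (fun j => mulX n j (l+1) * pd n (l+1) l),
        if_pos (by rw [Finset.mem_Icc]; omega)]
    · rw [if_neg hl1i]
      by_cases hlt : l + 2 ≤ i
      · -- l + 2 ≤ i : cancellation
        have key : ∀ j ∈ Finset.Icc (l+2) n,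
            br (mulX n j (l+1) * pd n j (l+1) * pd n (l+1) l)
               (mulX n (i+1) i + ∑ k ∈ Finset.Icc 1 (i-1), mulX n (i+1) k * pd n i k)
            = (if j = i+1 then mulX n j (l+1) * (pd n (l+1) l * pd n i (l+1)) else 0)
              - (if j = i then mulX n (i+1) (l+1) * (pd n j (l+1) * pd n (l+1) l) else 0) := by
          intro j hj
          rw [Finset.mem_Icc] at hj
          rw [br_add_right, br_Xpdpd_X, br_sum_right]
          have e1 : dl n j (l+1) (i+1) i = 0 := dl_eval_zero (by omega)
          have e2 : dl n (l+1) l (i+1) i = 0 := dl_eval_zero (by omega)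
          rw [e1, e2, zero_mul, zero_mul, add_zero, zero_add]
          have hBk : ∀ k ∈ Finset.Icc 1 (i-1),
              br (mulX n j (l+1) * pd n j (l+1) * pd n (l+1) l) (mulX n (i+1) k * pd n i k)
              = (if k = l+1 then
                  ((if j = i+1 then mulX n j (l+1) * (pd n (l+1) l * pd n i k) else 0)
                    - (if j = i then mulX n (i+1) k * (pd n j (l+1) * pd n (l+1) l) else 0))
                 else 0) := by
            intro k hk
            rw [Finset.mem_Icc] at hk
            rw [br_Xpdpd_Xpd]
            have e3 : dl n (l+1) l (i+1) k = 0 := dl_eval_zero (by omega)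
            rw [e3, zero_mul, add_zero]
            by_cases hkl : k = l+1
            · subst hkl
              rw [if_pos rfl]
              by_cases hj1 : j = i+1
              · subst hj1
                rw [dl_eval_pos ⟨by omega, by omega, by omega⟩ rfl rfl, one_mul, if_pos rfl]
                have e4 : dl n i (l+1) (i+1) (l+1) = 0 := dl_eval_zero (by omega)
                rw [e4, zero_mul, if_neg (by omega)]
              · rw [dl_eval_zero (by omega), zero_mul, if_neg hj1, zero_sub, zero_sub]
                by_cases hj2 : j = i
                · subst hj2
                  rw [dl_eval_pos ⟨by omega, by omega, by omega⟩ rfl rfl, one_mul, if_pos rfl]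
                · rw [dl_eval_zero (by omega), zero_mul, if_neg hj2]
            · rw [if_neg hkl]
              have e4 : dl n j (l+1) (i+1) k = 0 := dl_eval_zero (by omega)
              have e5 : dl n i k j (l+1) = 0 := dl_eval_zero (by omega)
              rw [e4, e5, zero_mul, zero_mul, sub_zero]
          rw [Finset.sum_congr rfl hBk,
            Finset.sum_ite_eq' (Finset.Icc 1 (i-1)) (l+1),
            if_pos (by rw [Finset.mem_Icc]; omega)]
        rw [Finset.sum_congr rfl key, Finset.sum_sub_distrib,
          Finset.sum_ite_eq' (Finset.Icc (l+2) n) (i+1)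
            (fun j => mulX n j (l+1) * (pd n (l+1) l * pd n i (l+1))),
          Finset.sum_ite_eq' (Finset.Icc (l+2) n) i
            (fun j => mulX n (i+1) (l+1) * (pd n j (l+1) * pd n (l+1) l)),
          if_pos (by rw [Finset.mem_Icc]; omega), if_pos (by rw [Finset.mem_Icc]; omega),
          pd_pd (l+1) l i (l+1), sub_self]
      · -- l > i : everything vanishes
        apply Finset.sum_eq_zero
        intro j hj
        rw [Finset.mem_Icc] at hj
        rw [br_add_right, br_Xpdpd_X, br_sum_right]
        have e1 : dl n j (l+1) (i+1) i = 0 := dl_eval_zero (by omega)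
        have e2 : dl n (l+1) l (i+1) i = 0 := dl_eval_zero (by omega)
        rw [e1, e2, zero_mul, zero_mul, add_zero, zero_add]
        apply Finset.sum_eq_zero
        intro k hk
        rw [Finset.mem_Icc] at hk
        have e3 : dl n j (l+1) (i+1) k = 0 := dl_eval_zero (by omega)
        have e4 : dl n (l+1) l (i+1) k = 0 := dl_eval_zero (by omega)
        have e5 : dl n i k j (l+1) = 0 := dl_eval_zero (by omega)
        rw [br_Xpdpd_Xpd, e3, e4, e5, zero_mul, zero_mul, zero_mul, add_zero, sub_zero]

lemma chunk4 (hn : 2 ≤ n) (l i : ℕ) (hl1 : 1 ≤ l) (hl2 : l ≤ n - 1) (hi1 : 1 ≤ i)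
    (hi2 : i ≤ n - 1) :
    br (∑ j ∈ Finset.Icc 1 (l-1), mulX n l j * pd n (l+1) j) (etaOp n i)
      = if l = i
        then ∑ k ∈ Finset.Icc 1 (i-1),
          (mulX n i k * pd n i k - mulX n (i+1) k * pd n (i+1) k)
        else 0 := by
  rw [etaOp, br_sum_left]
  by_cases hli : l = i
  · subst hli
    rw [if_pos rfl]
    have key : ∀ j ∈ Finset.Icc 1 (l-1),
        br (mulX n l j * pd n (l+1) j)
           (mulX n (l+1) l + ∑ k ∈ Finset.Icc 1 (l-1), mulX n (l+1) k * pd n l k)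
        = mulX n l j * pd n l j - mulX n (l+1) j * pd n (l+1) j := by
      intro j hj
      rw [Finset.mem_Icc] at hj
      rw [br_add_right, br_Xpd_X]
      have e1 : dl n (l+1) j (l+1) l = 0 := dl_eval_zero (by omega)
      rw [e1, zero_mul, zero_add, br_sum_right]
      have hBk : ∀ k ∈ Finset.Icc 1 (l-1),
          br (mulX n l j * pd n (l+1) j) (mulX n (l+1) k * pd n l k)
          = (if k = j then mulX n l j * pd n l k - mulX n (l+1) k * pd n (l+1) j else 0) := by
        intro k hk
        rw [Finset.mem_Icc] at hk
        rw [br_Xpd_Xpd]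
        by_cases hkj : k = j
        · subst hkj
          rw [dl_eval_pos ⟨by omega, by omega, by omega⟩ rfl rfl,
            dl_eval_pos ⟨by omega, by omega, by omega⟩ rfl rfl, one_mul, one_mul, if_pos rfl]
        · have e2 : dl n (l+1) j (l+1) k = 0 := dl_eval_zero (by omega)
          have e3 : dl n l k l j = 0 := dl_eval_zero (by omega)
          rw [e2, e3, zero_mul, zero_mul, sub_zero, if_neg hkj]
      rw [Finset.sum_congr rfl hBk,
        Finset.sum_ite_eq' (Finset.Icc 1 (l-1)) j
          (fun k => mulX n l j * pd n l k - mulX n (l+1) k * pd n (l+1) j),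
        if_pos (by rw [Finset.mem_Icc]; omega)]
    rw [Finset.sum_congr rfl key]
  · rw [if_neg hli]
    apply Finset.sum_eq_zero
    intro j hj
    rw [Finset.mem_Icc] at hj
    rw [br_add_right, br_Xpd_X]
    have e1 : dl n (l+1) j (i+1) i = 0 := dl_eval_zero (by omega)
    rw [e1, zero_mul, zero_add, br_sum_right]
    apply Finset.sum_eq_zero
    intro k hk
    rw [Finset.mem_Icc] at hk
    have e2 : dl n (l+1) j (i+1) k = 0 := dl_eval_zero (by omega)
    have e3 : dl n i k l j = 0 := dl_eval_zero (by omega)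
    rw [br_Xpd_Xpd, e2, e3, zero_mul, zero_mul, sub_zero]

lemma chunk5 (hn : 2 ≤ n) (l i : ℕ) (hl1 : 1 ≤ l) (hl2 : l ≤ n - 1) (hi1 : 1 ≤ i)
    (hi2 : i ≤ n - 1) :
    br (∑ j ∈ Finset.Icc (l+2) n, mulX n j (l+1) * pd n j l) (etaOp n i)
      = if l + 1 = i then mulX n (i+1) i * pd n i l else 0 := by
  rw [etaOp, br_sum_left]
  have hA : ∀ j ∈ Finset.Icc (l+2) n,
      br (mulX n j (l+1) * pd n j l)
         (mulX n (i+1) i + ∑ k ∈ Finset.Icc 1 (i-1), mulX n (i+1) k * pd n i k)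
      = ∑ k ∈ Finset.Icc 1 (i-1),
          br (mulX n j (l+1) * pd n j l) (mulX n (i+1) k * pd n i k) := by
    intro j hj
    rw [Finset.mem_Icc] at hj
    rw [br_add_right, br_Xpd_X]
    have e1 : dl n j l (i+1) i = 0 := dl_eval_zero (by omega)
    rw [e1, zero_mul, zero_add, br_sum_right]
  rw [Finset.sum_congr rfl hA]
  by_cases hl1i : l + 1 = i
  · rw [if_pos hl1i]
    obtain rfl : i = l + 1 := hl1i.symm
    simp only [show l+1+1 = l+2 from rfl, show l+1-1 = l from rfl]
    have key : ∀ j ∈ Finset.Icc (l+2) n,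
        ∑ k ∈ Finset.Icc 1 l,
            br (mulX n j (l+1) * pd n j l) (mulX n (l+2) k * pd n (l+1) k)
        = (if j = l+2 then mulX n (l+2) (l+1) * pd n (l+1) l else 0) := by
      intro j hj
      rw [Finset.mem_Icc] at hj
      have hBk : ∀ k ∈ Finset.Icc 1 l,
          br (mulX n j (l+1) * pd n j l) (mulX n (l+2) k * pd n (l+1) k)
          = (if k = l then (if j = l+2 then mulX n (l+2) (l+1) * pd n (l+1) l else 0) else 0) := by
        intro k hk
        rw [Finset.mem_Icc] at hk
        rw [br_Xpd_Xpd]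
        have e3 : dl n (l+1) k j (l+1) = 0 := dl_eval_zero (by omega)
        rw [e3, zero_mul, sub_zero]
        by_cases hkl : k = l
        · rw [hkl, if_pos rfl]
          by_cases hj2 : j = l+2
          · subst hj2
            rw [dl_eval_pos ⟨by omega, by omega, by omega⟩ rfl rfl, one_mul, if_pos rfl]
          · rw [dl_eval_zero (by omega), zero_mul, if_neg hj2]
        · rw [dl_eval_zero (by omega), zero_mul, if_neg hkl]
      rw [Finset.sum_congr rfl hBk,
        Finset.sum_ite_eq' (Finset.Icc 1 l) l
          (fun k => if j = l+2 then mulX n (l+2) (l+1) * pd n (l+1) l else 0),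
        if_pos (by rw [Finset.mem_Icc]; omega)]
    rw [Finset.sum_congr rfl key,
      Finset.sum_ite_eq' (Finset.Icc (l+2) n) (l+2)
        (fun _ => mulX n (l+2) (l+1) * pd n (l+1) l),
      if_pos (by rw [Finset.mem_Icc]; omega)]
  · rw [if_neg hl1i]
    by_cases hlt : l + 2 ≤ i
    · -- cancellation between (j,k) = (i+1,l) and (j,k) = (i,l+1)
      have key : ∀ j ∈ Finset.Icc (l+2) n,
          ∑ k ∈ Finset.Icc 1 (i-1),
              br (mulX n j (l+1) * pd n j l) (mulX n (i+1) k * pd n i k)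
          = (if j = i+1 then mulX n (i+1) (l+1) * pd n i l else 0)
            - (if j = i then mulX n (i+1) (l+1) * pd n i l else 0) := by
        intro j hj
        rw [Finset.mem_Icc] at hj
        have hBk : ∀ k ∈ Finset.Icc 1 (i-1),
            br (mulX n j (l+1) * pd n j l) (mulX n (i+1) k * pd n i k)
            = (if k = l then (if j = i+1 then mulX n (i+1) (l+1) * pd n i l else 0) else 0)
              - (if k = l+1 then (if j = i then mulX n (i+1) (l+1) * pd n i l else 0) else 0) := by
          intro k hk
          rw [Finset.mem_Icc] at hk
          rw [br_Xpd_Xpd]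
          by_cases hkl : k = l
          · rw [hkl, if_pos rfl, if_neg (show ¬(l = l+1) by omega)]
            have e3 : dl n i l j (l+1) = 0 := dl_eval_zero (by omega)
            rw [e3, zero_mul, sub_zero, sub_zero]
            by_cases hj1 : j = i+1
            · subst hj1
              rw [dl_eval_pos ⟨by omega, by omega, by omega⟩ rfl rfl, one_mul, if_pos rfl]
            · rw [dl_eval_zero (by omega), zero_mul, if_neg hj1]
          · rw [if_neg hkl]
            have e2 : dl n j l (i+1) k = 0 := dl_eval_zero (by omega)
            rw [e2, zero_mul, zero_sub, zero_sub]
            by_cases hkl1 : k = l+1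
            · subst hkl1
              rw [if_pos rfl]
              by_cases hj2 : j = i
              · subst hj2
                rw [dl_eval_pos ⟨by omega, by omega, by omega⟩ rfl rfl, one_mul, if_pos rfl]
              · rw [dl_eval_zero (by omega), zero_mul, if_neg hj2]
            · rw [dl_eval_zero (by omega), zero_mul, if_neg hkl1]
        rw [Finset.sum_congr rfl hBk, Finset.sum_sub_distrib,
          Finset.sum_ite_eq' (Finset.Icc 1 (i-1)) l
            (fun _ => if j = i+1 then mulX n (i+1) (l+1) * pd n i l else 0),
          Finset.sum_ite_eq' (Finset.Icc 1 (i-1)) (l+1)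
            (fun _ => if j = i then mulX n (i+1) (l+1) * pd n i l else 0),
          if_pos (show l ∈ Finset.Icc 1 (i-1) by rw [Finset.mem_Icc]; omega),
          if_pos (show l+1 ∈ Finset.Icc 1 (i-1) by rw [Finset.mem_Icc]; omega)]
      rw [Finset.sum_congr rfl key, Finset.sum_sub_distrib,
        Finset.sum_ite_eq' (Finset.Icc (l+2) n) (i+1)
          (fun _ => mulX n (i+1) (l+1) * pd n i l),
        Finset.sum_ite_eq' (Finset.Icc (l+2) n) i
          (fun _ => mulX n (i+1) (l+1) * pd n i l),
        if_pos (show i+1 ∈ Finset.Icc (l+2) n by rw [Finset.mem_Icc]; omega),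
        if_pos (show i ∈ Finset.Icc (l+2) n by rw [Finset.mem_Icc]; omega),
        sub_self]
    · apply Finset.sum_eq_zero
      intro j hj
      rw [Finset.mem_Icc] at hj
      apply Finset.sum_eq_zero
      intro k hk
      rw [Finset.mem_Icc] at hk
      have e2 : dl n j l (i+1) k = 0 := dl_eval_zero (by omega)
      have e3 : dl n i k j (l+1) = 0 := dl_eval_zero (by omega)
      rw [br_Xpd_Xpd, e2, e3, zero_mul, zero_mul, sub_zero]


variable {n : ℕ}

lemma br_one_left (B : Module.End ℂ (PolyA n)) : br 1 B = 0 := by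
  simp [br]

lemma comm2 (hn : 2 ≤ n) (lam : ℕ → ℂ) (i : ℕ) (hi1 : 1 ≤ i) (hi2 : i ≤ n - 1) :
    br (zetaOp n lam i) (etaOp n i) + (2:ℂ) • etaOp n i = 0 := by
  have hXI : br (mulX n (i+1) i * pd n (i+1) i) (etaOp n i) = mulX n (i+1) i := by
    rw [etaOp, br_add_right, br_Xpd_X,
      dl_eval_pos ⟨hi1, by omega, by omega⟩ rfl rfl, one_mul, br_sum_right]
    have h0 : ∑ k ∈ Finset.Icc 1 (i-1),
        br (mulX n (i+1) i * pd n (i+1) i) (mulX n (i+1) k * pd n i k) = 0 := by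
      apply Finset.sum_eq_zero
      intro k hk
      rw [Finset.mem_Icc] at hk
      have e1 : dl n (i+1) i (i+1) k = 0 := dl_eval_zero (by omega)
      have e2 : dl n i k (i+1) i = 0 := dl_eval_zero (by omega)
      rw [br_Xpd_Xpd, e1, e2, zero_mul, zero_mul, sub_zero]
    rw [h0, add_zero]
  have hsum1 : br (∑ p ∈ Finset.Icc 1 (i-1),
        (mulX n i p * pd n i p - mulX n (i+1) p * pd n (i+1) p)) (etaOp n i)
      = ∑ p ∈ Finset.Icc 1 (i-1),
          ((0 - mulX n (i+1) p * pd n i p) - mulX n (i+1) p * pd n i p) := by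
    rw [br_sum_left]
    apply Finset.sum_congr rfl
    intro p hp
    rw [Finset.mem_Icc] at hp
    rw [br_sub_left, etaOp, br_add_right, br_add_right, br_Xpd_X, br_Xpd_X]
    have e1 : dl n i p (i+1) i = 0 := dl_eval_zero (by omega)
    have e2 : dl n (i+1) p (i+1) i = 0 := dl_eval_zero (by omega)
    rw [e1, e2, zero_mul, zero_mul, zero_add, zero_add, br_sum_right, br_sum_right]
    have hA : ∀ k ∈ Finset.Icc 1 (i-1),
        br (mulX n i p * pd n i p) (mulX n (i+1) k * pd n i k)
        = 0 - (if k = p then mulX n (i+1) k * pd n i p else 0) := by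
      intro k hk
      rw [Finset.mem_Icc] at hk
      rw [br_Xpd_Xpd]
      have e3 : dl n i p (i+1) k = 0 := dl_eval_zero (by omega)
      rw [e3, zero_mul]
      by_cases hkp : k = p
      · rw [dl_eval_pos ⟨by omega, by omega, by omega⟩ rfl hkp, one_mul, if_pos hkp]
      · rw [dl_eval_zero (by omega), zero_mul, if_neg hkp]
    have hB : ∀ k ∈ Finset.Icc 1 (i-1),
        br (mulX n (i+1) p * pd n (i+1) p) (mulX n (i+1) k * pd n i k)
        = (if k = p then mulX n (i+1) p * pd n i k else 0) := by
      intro k hk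
      rw [Finset.mem_Icc] at hk
      rw [br_Xpd_Xpd]
      have e3 : dl n i k (i+1) p = 0 := dl_eval_zero (by omega)
      rw [e3, zero_mul, sub_zero]
      by_cases hkp : k = p
      · rw [dl_eval_pos ⟨by omega, by omega, by omega⟩ rfl hkp.symm, one_mul, if_pos hkp]
      · rw [dl_eval_zero (by omega), zero_mul, if_neg hkp]
    have hmem : p ∈ Finset.Icc 1 (i-1) := by rw [Finset.mem_Icc]; omega
    rw [Finset.sum_congr rfl hA, Finset.sum_congr rfl hB, Finset.sum_sub_distrib,
      Finset.sum_const_zero,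
      Finset.sum_ite_eq' (Finset.Icc 1 (i-1)) p (fun k => mulX n (i+1) k * pd n i p),
      Finset.sum_ite_eq' (Finset.Icc 1 (i-1)) p (fun k => mulX n (i+1) p * pd n i k),
      if_pos hmem]
  have hsum2 : br (∑ j ∈ Finset.Icc (i+2) n,
        (mulX n j (i+1) * pd n j (i+1) - mulX n j i * pd n j i)) (etaOp n i) = 0 := by
    rw [br_sum_left]
    apply Finset.sum_eq_zero
    intro j hj
    rw [Finset.mem_Icc] at hj
    rw [br_sub_left, etaOp, br_add_right, br_add_right, br_Xpd_X, br_Xpd_X]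
    have e1 : dl n j (i+1) (i+1) i = 0 := dl_eval_zero (by omega)
    have e2 : dl n j i (i+1) i = 0 := dl_eval_zero (by omega)
    rw [e1, e2, zero_mul, zero_mul, zero_add, zero_add, br_sum_right, br_sum_right]
    have hA : ∑ k ∈ Finset.Icc 1 (i-1),
        br (mulX n j (i+1) * pd n j (i+1)) (mulX n (i+1) k * pd n i k) = 0 := by
      apply Finset.sum_eq_zero
      intro k hk
      rw [Finset.mem_Icc] at hk
      have e3 : dl n j (i+1) (i+1) k = 0 := dl_eval_zero (by omega)
      have e4 : dl n i k j (i+1) = 0 := dl_eval_zero (by omega)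
      rw [br_Xpd_Xpd, e3, e4, zero_mul, zero_mul, sub_zero]
    have hB : ∑ k ∈ Finset.Icc 1 (i-1),
        br (mulX n j i * pd n j i) (mulX n (i+1) k * pd n i k) = 0 := by
      apply Finset.sum_eq_zero
      intro k hk
      rw [Finset.mem_Icc] at hk
      have e3 : dl n j i (i+1) k = 0 := dl_eval_zero (by omega)
      have e4 : dl n i k j i = 0 := dl_eval_zero (by omega)
      rw [br_Xpd_Xpd, e3, e4, zero_mul, zero_mul, sub_zero]
    rw [hA, hB, sub_self]
  rw [zetaOp, br_sub_left, br_add_left, br_add_left, br_smul_left, br_one_left, smul_zero,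
    br_smul_left, hXI, hsum1, hsum2, Finset.sum_sub_distrib, Finset.sum_sub_distrib,
    Finset.sum_const_zero]
  rw [etaOp]
  rw [two_smul ℂ (mulX n (i+1) i), two_smul ℂ (mulX n (i+1) i
    + ∑ j ∈ Finset.Icc 1 (i-1), mulX n (i+1) j * pd n i j)]
  abel


lemma comm1 (hn : 2 ≤ n) (lam : ℕ → ℂ) (l i : ℕ) (hl1 : 1 ≤ l) (hl2 : l ≤ n - 1)
    (hi1 : 1 ≤ i) (hi2 : i ≤ n - 1) :
    br (dOp n lam l) (etaOp n i) = if l = i then zetaOp n lam i else 0 := by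
  have hd : dOp n lam l
      = lam l • pd n (l+1) l
          - (∑ j ∈ Finset.Icc (l+1) n, mulX n j l * pd n j l) * pd n (l+1) l
          + (∑ j ∈ Finset.Icc (l+2) n, mulX n j (l+1) * pd n j (l+1)) * pd n (l+1) l
          + ∑ j ∈ Finset.Icc 1 (l-1), mulX n l j * pd n (l+1) j
          - ∑ j ∈ Finset.Icc (l+2) n, mulX n j (l+1) * pd n j l := by
    rw [dOp, add_mul, sub_mul, smul_mul_assoc, one_mul]
  rw [hd, br_sub_left, br_add_left, br_add_left, br_sub_left, br_smul_left,
    chunk1 hn l i hl1 hl2 hi1 hi2, chunk2 hn l i hl1 hl2 hi1 hi2,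
    chunk3 hn l i hl1 hl2 hi1 hi2, chunk4 hn l i hl1 hl2 hi1 hi2,
    chunk5 hn l i hl1 hl2 hi1 hi2]
  by_cases hli : l = i
  · subst hli
    rw [if_pos rfl, if_pos rfl, if_pos rfl, if_pos rfl,
      if_neg (show ¬(l + 1 = l) by omega)]
    have hsplit : ∑ j ∈ Finset.Icc (l+1) n, mulX n j l * pd n j l
        = mulX n (l+1) l * pd n (l+1) l + ∑ j ∈ Finset.Icc (l+2) n, mulX n j l * pd n j l := by
      have hins : Finset.Icc (l+1) n = insert (l+1) (Finset.Icc (l+2) n) := by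
        ext x
        simp only [Finset.mem_Icc, Finset.mem_insert]
        omega
      rw [hins, Finset.sum_insert (by rw [Finset.mem_Icc]; omega)]
    rw [hsplit, zetaOp, Finset.sum_sub_distrib, Finset.sum_sub_distrib,
      two_smul ℂ (mulX n (l+1) l * pd n (l+1) l), if_pos rfl]
    abel
  · rw [if_neg hli, if_neg hli, if_neg hli, if_neg hli, if_neg hli]
    simp only [smul_zero]
    abel

/-- Abstract sl₂-type computation. -/
lemma sl2pow {R : Type*} [Ring R] [Algebra ℂ R] (d e z : R) (h1 : d * e - e * d = z)
    (h2 : z * e + (2:ℂ) • e = e * z) (k : ℕ) :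
    d * e ^ (k+1) - e ^ (k+1) * d
      = ((k+1 : ℕ) : ℂ) • (e ^ k * ((-(k : ℂ)) • (1 : R) + z)) := by
  induction k with
  | zero =>
      simp only [pow_one, pow_zero, one_mul, Nat.cast_one, Nat.cast_zero, neg_zero,
        zero_smul, zero_add, one_smul]
      exact h1
  | succ k ih =>
      have expand : d * e ^ (k+2) - e ^ (k+2) * d
          = (d * e ^ (k+1) - e ^ (k+1) * d) * e + e ^ (k+1) * (d * e - e * d) := by
        rw [pow_succ]
        ring_nf
        noncomm_ring
      rw [expand, ih, h1]
      have hze : z * e = e * z - (2:ℂ) • e := by rw [← h2]; abel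
      rw [smul_mul_assoc, mul_assoc, add_mul, smul_mul_assoc, one_mul, hze]
      have hcast : ((k+1+1 : ℕ) : ℂ) = ((k+1 : ℕ) : ℂ) + 1 := by push_cast; ring
      have hcast2 : ((k+1 : ℕ) : ℂ) = (k : ℂ) + 1 := by push_cast; ring
      rw [hcast, hcast2]
      have hpow : e ^ k * (e * z) = e ^ (k+1) * z := by rw [← mul_assoc, ← pow_succ]
      have hpow2 : e ^ k * e = e ^ (k+1) := by rw [← pow_succ]
      rw [mul_add, mul_sub, hpow, mul_smul_comm, hpow2, mul_smul_comm (2:ℂ) (e^k) e, hpow2,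
        mul_add (e^(k+1)), mul_smul_comm, mul_one]
      module

end St1

/-- For `l, i ∈ {1,…,n-1}` and `m ∈ ℕ`:
`[d_l, η_i^m] = m · δ_{l,i} · η_i^{m-1} ∘ ((1-m)·id + ζ_i)`. -/
theorem statement1 (n : ℕ) (hn : 2 ≤ n) (lam : ℕ → ℂ)
    (l i : ℕ) (hl1 : 1 ≤ l) (hl2 : l ≤ n - 1) (hi1 : 1 ≤ i) (hi2 : i ≤ n - 1) (m : ℕ) :
    dOp n lam l * etaOp n i ^ m - etaOp n i ^ m * dOp n lam l
      = (m : ℂ) • (if l = i then (1 : ℂ) else 0) •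
          (etaOp n i ^ (m - 1) *
            ((1 - (m : ℂ)) • (1 : Module.End ℂ (PolyA n)) + zetaOp n lam i)) := by
  by_cases hli : l = i
  · subst hli
    rw [if_pos rfl, one_smul]
    cases m with
    | zero => simp
    | succ k =>
        have h1 : dOp n lam l * etaOp n l - etaOp n l * dOp n lam l = zetaOp n lam l := by
          have h := St1.comm1 hn lam l l hl1 hl2 hl1 hl2
          rw [if_pos rfl] at h
          exact h
        have h2 : zetaOp n lam l * etaOp n l + (2:ℂ) • etaOp n l
            = etaOp n l * zetaOp n lam l := by
          have h' : (zetaOp n lam l * etaOp n l - etaOp n l * zetaOp n lam l)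
              + (2:ℂ) • etaOp n l = 0 := St1.comm2 hn lam l hl1 hl2
          rw [← sub_eq_zero]
          calc zetaOp n lam l * etaOp n l + (2:ℂ) • etaOp n l - etaOp n l * zetaOp n lam l
              = (zetaOp n lam l * etaOp n l - etaOp n l * zetaOp n lam l)
                  + (2:ℂ) • etaOp n l := by abel
            _ = 0 := h'
        have key := St1.sl2pow (dOp n lam l) (etaOp n l) (zetaOp n lam l) h1 h2 k
        simp only [Nat.add_sub_cancel]
        rw [show (1 - ((k+1 : ℕ) : ℂ)) = -(k : ℂ) by push_cast; ring]
        exact key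
  · rw [if_neg hli, zero_smul, smul_zero]
    have h0 : dOp n lam l * etaOp n i = etaOp n i * dOp n lam l := by
      have h := St1.comm1 hn lam l i hl1 hl2 hi1 hi2
      rw [if_neg hli] at h
      exact sub_eq_zero.mp h
    have hc : Commute (dOp n lam l) (etaOp n i) := h0
    rw [(hc.pow_right m).eq, sub_self]
end

section
/- For all l, i ∈ {1,…,n−1} and every m ∈ ℕ, the operators on A satisfy [ζ_l, η_i^m] = −m · a_{l,i} · η_i^m, where a_{l,i} is the (l,i) entry of the Cartan matrix of sl(n): a_{l,l} = 2, a_{l,i} = −1 if |l−i| = 1, and a_{l,i} = 0 otherwise. -/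
open MvPolynomial LieAlgebra LieAlgebra.SpecialLinear

/-- The `(l,i)` entry of the Cartan matrix of `sl(n)`. -/
noncomputable def cartan (l i : ℕ) : ℂ :=
  if l = i then 2 else if l = i + 1 ∨ i = l + 1 then -1 else 0

lemma pderiv_comm' {σ R : Type*} [CommRing R] (i j : σ) (p : MvPolynomial σ R) :
    pderiv i (pderiv j p) = pderiv j (pderiv i p) := by
  classical
  induction p using MvPolynomial.induction_on' with
  | monomial s a =>
    by_cases h : i = j
    · subst h; rfl
    · simp only [pderiv_monomial]
      have e1 : (s - (Finsupp.single j 1 : _ →₀ ℕ)) i = s i := by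
        rw [Finsupp.tsub_apply, Finsupp.single_apply, if_neg (Ne.symm h)]; omega
      have e2 : (s - (Finsupp.single i 1 : _ →₀ ℕ)) j = s j := by
        rw [Finsupp.tsub_apply, Finsupp.single_apply, if_neg h]; omega
      have e3 : s - Finsupp.single j 1 - Finsupp.single i 1
          = s - Finsupp.single i 1 - Finsupp.single j 1 := by
        ext k
        simp only [Finsupp.tsub_apply]
        omega
      rw [e1, e2, e3]
      congr 1
      ring
  | add p q hp hq => simp [map_add, hp, hq]

lemma pd_mulX (n a b c d : ℕ) :
    pd n a b * mulX n c d
      = mulX n c d * pd n a b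
        + (if a = c ∧ b = d ∧ 1 ≤ b ∧ b < a ∧ a ≤ n then (1 : Module.End ℂ (PolyA n)) else 0) := by
  by_cases h1 : 1 ≤ b ∧ b < a ∧ a ≤ n
  · by_cases h2 : 1 ≤ d ∧ d < c ∧ c ≤ n
    · by_cases hcd : a = c ∧ b = d
      · obtain ⟨rfl, rfl⟩ := hcd
        rw [pd, mulX, dif_pos h1, dif_pos h2, if_pos ⟨rfl, rfl, h1⟩]
        have hx : (⟨(a, b), h2⟩ : XIdx n) = ⟨(a, b), h1⟩ := rfl
        rw [hx]
        apply LinearMap.ext; intro p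
        simp only [Module.End.mul_apply, LinearMap.add_apply, LinearMap.mulLeft_apply,
          Derivation.coeFn_coe, pderiv_mul, pderiv_X_self, one_mul, Module.End.one_apply]
        ring
      · rw [pd, mulX, dif_pos h1, dif_pos h2, if_neg (by rintro ⟨h3, h4, _⟩; exact hcd ⟨h3, h4⟩),
          add_zero]
        have hne : (⟨(c, d), h2⟩ : XIdx n) ≠ ⟨(a, b), h1⟩ := by
          intro h
          simp only [Subtype.mk.injEq, Prod.mk.injEq] at h
          exact hcd ⟨h.1.symm, h.2.symm⟩
        apply LinearMap.ext; intro p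
        simp only [Module.End.mul_apply, LinearMap.mulLeft_apply, Derivation.coeFn_coe,
          pderiv_mul, pderiv_X_of_ne hne, zero_mul, zero_add]
    · rw [mulX, dif_neg h2, mul_zero, zero_mul, zero_add,
        if_neg (by rintro ⟨rfl, rfl, h⟩; exact h2 h)]
  · rw [pd, dif_neg h1, mul_zero, zero_mul, zero_add,
      if_neg (by rintro ⟨_, _, h⟩; exact h1 h)]

lemma mulX_mulX (n a b c d : ℕ) :
    mulX n a b * mulX n c d = mulX n c d * mulX n a b := by
  unfold mulX
  split_ifs with h1 h2 h2
  · apply LinearMap.ext; intro p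
    simp only [Module.End.mul_apply, LinearMap.mulLeft_apply]
    ring
  · simp
  · simp
  · simp

lemma pd_pd (n a b c d : ℕ) :
    pd n a b * pd n c d = pd n c d * pd n a b := by
  unfold pd
  split_ifs with h1 h2 h2
  · apply LinearMap.ext; intro p
    simp only [Module.End.mul_apply, Derivation.coeFn_coe]
    exact pderiv_comm' _ _ p
  · simp
  · simp
  · simp

noncomputable def EOp (n a b : ℕ) : Module.End ℂ (PolyA n) := mulX n a b * pd n a b

lemma mulX_invalid {n a b : ℕ} (h : ¬(1 ≤ b ∧ b < a ∧ a ≤ n)) : mulX n a b = 0 := by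
  rw [mulX, dif_neg h]

lemma pd_invalid {n a b : ℕ} (h : ¬(1 ≤ b ∧ b < a ∧ a ≤ n)) : pd n a b = 0 := by
  rw [pd, dif_neg h]

lemma E_mulX_comm (n a b c d : ℕ) :
    EOp n a b * mulX n c d - mulX n c d * EOp n a b
      = (if a = c ∧ b = d then (1:ℂ) else 0) • mulX n c d := by
  unfold EOp
  rw [mul_assoc, pd_mulX, mul_add, ← mul_assoc, mulX_mulX n a b c d, mul_assoc, ← mul_assoc]
  rw [add_sub_cancel_left]
  by_cases hcd : a = c ∧ b = d
  · obtain ⟨rfl, rfl⟩ := hcd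
    by_cases hv : 1 ≤ b ∧ b < a ∧ a ≤ n
    · rw [if_pos ⟨rfl, rfl, hv⟩, mul_one, if_pos (⟨rfl, rfl⟩ : a = a ∧ b = b), one_smul]
    · rw [if_neg (fun h => hv h.2.2), mul_zero, if_pos (⟨rfl, rfl⟩ : a = a ∧ b = b), one_smul,
        mulX_invalid hv]
  · rw [if_neg (by rintro ⟨h3, h4, _⟩; exact hcd ⟨h3, h4⟩), if_neg hcd, mul_zero, zero_smul]

lemma E_pd_comm (n a b c d : ℕ) :
    EOp n a b * pd n c d - pd n c d * EOp n a b
      = (-(if a = c ∧ b = d then (1:ℂ) else 0)) • pd n c d := by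
  unfold EOp
  have h : pd n c d * (mulX n a b * pd n a b)
      = mulX n a b * pd n c d * pd n a b
        + (if c = a ∧ d = b ∧ 1 ≤ d ∧ d < c ∧ c ≤ n then (1 : Module.End ℂ (PolyA n)) else 0)
          * pd n a b := by
    rw [← mul_assoc, pd_mulX, add_mul]
  rw [h, mul_assoc, pd_pd n a b c d, ← mul_assoc]
  rw [sub_add_eq_sub_sub, sub_self, zero_sub]
  by_cases hcd : a = c ∧ b = d
  · obtain ⟨rfl, rfl⟩ := hcd
    by_cases hv : 1 ≤ b ∧ b < a ∧ a ≤ n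
    · rw [if_pos (⟨rfl, rfl, hv⟩ : a = a ∧ b = b ∧ _), one_mul,
        if_pos (⟨rfl, rfl⟩ : a = a ∧ b = b)]
      exact (neg_one_smul ℂ _).symm
    · rw [pd_invalid hv, mul_zero, neg_zero, smul_zero]
  · rw [if_neg (by rintro ⟨h3, h4, _⟩; exact hcd ⟨h3.symm, h4.symm⟩), zero_mul, neg_zero,
      if_neg hcd, neg_zero, zero_smul]

lemma E_term_comm (n a b c d e f : ℕ) :
    EOp n a b * (mulX n c d * pd n e f) - (mulX n c d * pd n e f) * EOp n a b
      = ((if a = c ∧ b = d then (1:ℂ) else 0) - (if a = e ∧ b = f then 1 else 0))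
          • (mulX n c d * pd n e f) := by
  have key : EOp n a b * (mulX n c d * pd n e f) - (mulX n c d * pd n e f) * EOp n a b
      = (EOp n a b * mulX n c d - mulX n c d * EOp n a b) * pd n e f
        + mulX n c d * (EOp n a b * pd n e f - pd n e f * EOp n a b) := by
    simp only [sub_mul, mul_sub, mul_assoc]
    abel
  rw [key, E_mulX_comm, E_pd_comm, smul_mul_assoc, mul_smul_comm]
  module

lemma sum_op_comm {n : ℕ} (T : Module.End ℂ (PolyA n)) {s : Finset ℕ}
    {A : ℕ → Module.End ℂ (PolyA n)} {c : ℕ → ℂ}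
    (h : ∀ p ∈ s, A p * T - T * A p = c p • T) :
    (∑ p ∈ s, A p) * T - T * (∑ p ∈ s, A p) = (∑ p ∈ s, c p) • T := by
  rw [Finset.sum_mul, Finset.mul_sum, ← Finset.sum_sub_distrib, Finset.sum_smul]
  exact Finset.sum_congr rfl h

lemma zeta_comm (n : ℕ) (lam : ℕ → ℂ) (l : ℕ) (T : Module.End ℂ (PolyA n)) (δ : ℕ → ℕ → ℂ)
    (hT : ∀ a b, EOp n a b * T - T * EOp n a b = δ a b • T) :
    zetaOp n lam l * T - T * zetaOp n lam l
      = ((∑ p ∈ Finset.Icc 1 (l-1), (δ l p - δ (l+1) p))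
          + (∑ j ∈ Finset.Icc (l+2) n, (δ j (l+1) - δ j l))
          - 2 * δ (l+1) l) • T := by
  have expand_sub : ∀ x y : Module.End ℂ (PolyA n),
      (x - y) * T - T * (x - y) = (x * T - T * x) - (y * T - T * y) := by
    intro x y; rw [sub_mul, mul_sub]; abel
  have expand_add : ∀ x y : Module.End ℂ (PolyA n),
      (x + y) * T - T * (x + y) = (x * T - T * x) + (y * T - T * y) := by
    intro x y; rw [add_mul, mul_add]; abel
  have h0 : (lam l • (1 : Module.End ℂ (PolyA n))) * T - T * (lam l • 1) = 0 := by
    rw [smul_mul_assoc, mul_smul_comm, one_mul, mul_one, sub_self]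
  have h1 : (∑ p ∈ Finset.Icc 1 (l-1), (mulX n l p * pd n l p - mulX n (l+1) p * pd n (l+1) p)) * T
      - T * (∑ p ∈ Finset.Icc 1 (l-1), (mulX n l p * pd n l p - mulX n (l+1) p * pd n (l+1) p))
      = (∑ p ∈ Finset.Icc 1 (l-1), (δ l p - δ (l+1) p)) • T := by
    apply sum_op_comm
    intro p _
    have e : mulX n l p * pd n l p - mulX n (l+1) p * pd n (l+1) p
        = EOp n l p - EOp n (l+1) p := rfl
    rw [e, expand_sub, hT, hT]
    module
  have h2 : (∑ j ∈ Finset.Icc (l+2) n, (mulX n j (l+1) * pd n j (l+1) - mulX n j l * pd n j l)) * T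
      - T * (∑ j ∈ Finset.Icc (l+2) n, (mulX n j (l+1) * pd n j (l+1) - mulX n j l * pd n j l))
      = (∑ j ∈ Finset.Icc (l+2) n, (δ j (l+1) - δ j l)) • T := by
    apply sum_op_comm
    intro j _
    have e : mulX n j (l+1) * pd n j (l+1) - mulX n j l * pd n j l
        = EOp n j (l+1) - EOp n j l := rfl
    rw [e, expand_sub, hT, hT]
    module
  have h3 : ((2:ℂ) • (mulX n (l+1) l * pd n (l+1) l)) * T
      - T * ((2:ℂ) • (mulX n (l+1) l * pd n (l+1) l))
      = (2 * δ (l+1) l) • T := by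
    have e : mulX n (l+1) l * pd n (l+1) l = EOp n (l+1) l := rfl
    rw [e, smul_mul_assoc, mul_smul_comm,
      (smul_sub (2:ℂ) (EOp n (l+1) l * T) (T * EOp n (l+1) l)).symm, hT, smul_smul]
  rw [zetaOp, expand_sub, expand_add, expand_add, h0, h1, h2, h3, zero_add]
  module

lemma sum_ind (s : Finset ℕ) (C : Prop) [Decidable C] (c : ℕ) :
    (∑ p ∈ s, if C ∧ p = c then (1:ℂ) else 0) = if C ∧ c ∈ s then 1 else 0 := by
  by_cases hC : C
  · simp only [hC, true_and]; exact Finset.sum_ite_eq' s c fun _ => (1:ℂ)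
  · simp [hC]
lemma sum_ind' (s : Finset ℕ) (C : Prop) [Decidable C] (c : ℕ) :
    (∑ p ∈ s, if p = c ∧ C then (1:ℂ) else 0) = if c ∈ s ∧ C then 1 else 0 := by
  by_cases hC : C
  · simp only [hC, and_true]; exact Finset.sum_ite_eq' s c fun _ => (1:ℂ)
  · simp [hC]
set_option maxHeartbeats 1000000 in
lemma weight0 (n l i : ℕ) (hn : 2 ≤ n) (hl1 : 1 ≤ l) (hl2 : l ≤ n - 1)
    (hi1 : 1 ≤ i) (hi2 : i ≤ n - 1) :
    (∑ p ∈ Finset.Icc 1 (l-1), ((if l = i+1 ∧ p = i then (1:ℂ) else 0)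
        - (if l+1 = i+1 ∧ p = i then 1 else 0)))
      + (∑ j ∈ Finset.Icc (l+2) n, ((if j = i+1 ∧ l+1 = i then (1:ℂ) else 0)
        - (if j = i+1 ∧ l = i then 1 else 0)))
      - 2 * (if l+1 = i+1 ∧ l = i then (1:ℂ) else 0) = -cartan l i := by
  rw [Finset.sum_sub_distrib, Finset.sum_sub_distrib, sum_ind, sum_ind, sum_ind', sum_ind']
  simp only [Finset.mem_Icc, cartan]
  split_ifs <;> first | (exfalso; omega) | norm_num

lemma weightJ (n l i j : ℕ) (hn : 2 ≤ n) (hl1 : 1 ≤ l) (hl2 : l ≤ n - 1)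
    (hi1 : 1 ≤ i) (hi2 : i ≤ n - 1) (hj1 : 1 ≤ j) (hj2 : j ≤ i - 1) :
    (∑ p ∈ Finset.Icc 1 (l-1),
        (((if l = i+1 ∧ p = j then (1:ℂ) else 0) - (if l = i ∧ p = j then 1 else 0))
          - ((if l+1 = i+1 ∧ p = j then (1:ℂ) else 0) - (if l+1 = i ∧ p = j then 1 else 0))))
      + (∑ q ∈ Finset.Icc (l+2) n,
        (((if q = i+1 ∧ l+1 = j then (1:ℂ) else 0) - (if q = i ∧ l+1 = j then 1 else 0))
          - ((if q = i+1 ∧ l = j then (1:ℂ) else 0) - (if q = i ∧ l = j then 1 else 0))))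
      - 2 * ((if l+1 = i+1 ∧ l = j then (1:ℂ) else 0) - (if l+1 = i ∧ l = j then 1 else 0))
      = -cartan l i := by
  simp only [Finset.sum_sub_distrib, sum_ind, sum_ind', Finset.mem_Icc]
  have hcase : l = i ∨ l = i + 1 ∨ i = l + 1 ∨ (¬l = i ∧ ¬l = i+1 ∧ ¬i = l+1) := by omega
  rcases hcase with h | h | h | ⟨h1, h2, h3⟩
  · subst h
    simp only [show ¬(l = l+1) from by omega, hj1, hj2, show ¬(l+2 ≤ l+1) from by omega,
      show ¬(l+2 ≤ l) from by omega, show ¬(l = j) from by omega,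
      show ¬(l+1 = l) from by omega, cartan, if_true, if_false, false_and, and_false, true_and,
      and_true, if_pos rfl, ite_self]
    norm_num
  · subst h
    simp only [hj1, show j ≤ i + 1 - 1 from by omega, show ¬(i+1 = i) from by omega,
      show ¬(i+1+1 = i+1) from by omega, show ¬(i+1+1 = i) from by omega,
      show ¬(i+1+2 ≤ i+1) from by omega, show ¬(i+1+2 ≤ i) from by omega,
      show ¬(i+1 = j) from by omega, cartan, if_true, if_false, false_and, and_false, true_and,
      and_true, if_pos rfl, ite_self, or_iff_left, eq_self_iff_true, true_or, or_true, if_neg]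
    norm_num
  · subst h
    by_cases hj : j = l
    · subst hj
      simp only [show ¬(j = j+1+1) from by omega, show ¬(j = j+1) from by omega,
        show ¬(j+1 = j+1+1) from by omega, show ¬(j ≤ j-1) from by omega,
        show ¬(j+2 ≤ j+1) from by omega, show ¬(j+1 = j) from by omega,
        show j+2 ≤ j+1+1 from by omega, show j+1+1 ≤ n from by omega,
        cartan, if_true, if_false, false_and, and_false, true_and,
        and_true, if_pos rfl, ite_self, true_or, or_true]
      norm_num
    · simp only [show ¬(l = l+1+1) from by omega, show ¬(l = l+1) from by omega,
        show ¬(l+1 = l+1+1) from by omega, hj1, show j ≤ l - 1 from by omega,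
        show ¬(l+2 ≤ l+1) from by omega, show ¬(l+1 = j) from by omega,
        show ¬(l = j) from by omega,
        cartan, if_true, if_false, false_and, and_false, true_and,
        and_true, if_pos rfl, ite_self, true_or, or_true]
      norm_num
  · by_cases hb : l + 1 = j
    · subst hb
      simp only [show ¬(l = i+1) from h2, show ¬(l = i) from h1,
        show ¬(l+1 = i+1) from by omega, show ¬(l+1 = i) from by omega,
        show ¬(l = l+1) from by omega,
        show l+2 ≤ i+1 from by omega, show i+1 ≤ n from by omega,
        show l+2 ≤ i from by omega, show i ≤ n from by omega,
        cartan, if_true, if_false, false_and, and_false, true_and,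
        and_true, if_pos rfl, ite_self, or_self, if_neg]
      norm_num [h1, h2, h3]
    · by_cases hc : l = j
      · subst hc
        simp only [show ¬(l = i+1) from h2, show ¬(l = i) from h1,
          show ¬(l+1 = i+1) from by omega, show ¬(l+1 = i) from by omega,
          show ¬(l+1 = l) from by omega,
          show l+2 ≤ i+1 from by omega, show i+1 ≤ n from by omega,
          show l+2 ≤ i from by omega, show i ≤ n from by omega,
          cartan, if_true, if_false, false_and, and_false, true_and,
          and_true, if_pos rfl, ite_self, or_self, if_neg]
        norm_num [h1, h2, h3]
      · simp only [show ¬(l = i+1) from h2, show ¬(l = i) from h1,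
          show ¬(l+1 = i+1) from by omega, show ¬(l+1 = i) from by omega,
          hb, hc,
          cartan, if_true, if_false, false_and, and_false, true_and,
          and_true, ite_self, or_self]
        norm_num [h1, h2, h3]


lemma zeta_eta_comm (n : ℕ) (hn : 2 ≤ n) (lam : ℕ → ℂ) (l i : ℕ)
    (hl1 : 1 ≤ l) (hl2 : l ≤ n - 1) (hi1 : 1 ≤ i) (hi2 : i ≤ n - 1) :
    zetaOp n lam l * etaOp n i - etaOp n i * zetaOp n lam l
      = (-cartan l i) • etaOp n i := by
  rw [etaOp]
  have expand_add : ∀ x y : Module.End ℂ (PolyA n),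
      zetaOp n lam l * (x + y) - (x + y) * zetaOp n lam l
        = (zetaOp n lam l * x - x * zetaOp n lam l)
          + (zetaOp n lam l * y - y * zetaOp n lam l) := by
    intro x y; rw [mul_add, add_mul]; abel
  rw [expand_add]
  have hA : zetaOp n lam l * mulX n (i+1) i - mulX n (i+1) i * zetaOp n lam l
      = (-cartan l i) • mulX n (i+1) i := by
    rw [zeta_comm n lam l _ (fun a b => if a = i+1 ∧ b = i then (1:ℂ) else 0)
      (fun a b => E_mulX_comm n a b (i+1) i)]
    congr 1
    exact weight0 n l i hn hl1 hl2 hi1 hi2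
  have hB : zetaOp n lam l * (∑ j ∈ Finset.Icc 1 (i-1), mulX n (i+1) j * pd n i j)
      - (∑ j ∈ Finset.Icc 1 (i-1), mulX n (i+1) j * pd n i j) * zetaOp n lam l
      = (-cartan l i) • ∑ j ∈ Finset.Icc 1 (i-1), mulX n (i+1) j * pd n i j := by
    rw [Finset.mul_sum, Finset.sum_mul, ← Finset.sum_sub_distrib, Finset.smul_sum]
    apply Finset.sum_congr rfl
    intro j hj
    simp only [Finset.mem_Icc] at hj
    rw [zeta_comm n lam l _
      (fun a b => (if a = i+1 ∧ b = j then (1:ℂ) else 0) - (if a = i ∧ b = j then 1 else 0))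
      (fun a b => E_term_comm n a b (i+1) j i j)]
    congr 1
    exact weightJ n l i j hn hl1 hl2 hi1 hi2 hj.1 hj.2
  rw [hA, hB, ← smul_add]

/-- For `l, i ∈ {1,…,n-1}` and `m ∈ ℕ`: `[ζ_l, η_i^m] = -m · a_{l,i} · η_i^m`. -/
theorem statement2 (n : ℕ) (hn : 2 ≤ n) (lam : ℕ → ℂ)
    (l i : ℕ) (hl1 : 1 ≤ l) (hl2 : l ≤ n - 1) (hi1 : 1 ≤ i) (hi2 : i ≤ n - 1) (m : ℕ) :
    zetaOp n lam l * etaOp n i ^ m - etaOp n i ^ m * zetaOp n lam l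
      = (-(m : ℂ) * cartan l i) • etaOp n i ^ m := by
  have h1 := zeta_eta_comm n hn lam l i hl1 hl2 hi1 hi2
  have key : ∀ m : ℕ, zetaOp n lam l * etaOp n i ^ m - etaOp n i ^ m * zetaOp n lam l
      = ((m : ℂ) * (-cartan l i)) • etaOp n i ^ m := by
    intro m
    induction m with
    | zero => simp
    | succ k ih =>
      rw [pow_succ']
      have expand : zetaOp n lam l * (etaOp n i * etaOp n i ^ k)
          - (etaOp n i * etaOp n i ^ k) * zetaOp n lam l
          = (zetaOp n lam l * etaOp n i - etaOp n i * zetaOp n lam l) * etaOp n i ^ k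
            + etaOp n i * (zetaOp n lam l * etaOp n i ^ k - etaOp n i ^ k * zetaOp n lam l) := by
        simp only [sub_mul, mul_sub, mul_assoc]
        abel
      rw [expand, h1, ih, smul_mul_assoc, mul_smul_comm]
      push_cast
      module
  rw [key m, show -(m : ℂ) * cartan l i = (m : ℂ) * (-cartan l i) by ring]
end

section
/- Let m ≥ 1 and let ℑ : {1,…,m} → {1,…,n−1} be a map with ℑ(k) ≠ ℑ(k+1) for 1 ≤ k ≤ m−1. Define ι_1 = λ_{ℑ(1)} + 1 and, recursively, ι_k = λ_{ℑ(k)} + 1 − Σ_{p=1}^{k−1} a_{ℑ(k),ℑ(p)} ι_p for k > 1, where a_{l,i} is the (l,i) entry of the Cartan matrix of sl(n) (a_{l,l} = 2, a_{l,i} = −1 if |l−i| = 1, a_{l,i} = 0 otherwise). Assume every ι_k is a nonnegative integer, and set η[ℑ] = η_{ℑ(m)}^{ι_m} ∘ η_{ℑ(m−1)}^{ι_{m−1}} ∘ ⋯ ∘ η_{ℑ(1)}^{ι_1} applied to the constant polynomial 1. Then η[ℑ] ∈ A satisfies d_j(η[ℑ]) = 0 for every j = 1,…,n−1; moreover η[ℑ]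 is weighted: ζ_j(η[ℑ]) = (λ_j − Σ_{k=1}^{m} a_{j,ℑ(k)} ι_k) · η[ℑ] for every j = 1,…,n−1. -/
open MvPolynomial LieAlgebra LieAlgebra.SpecialLinear

/-- The recursively defined exponents `ι_k = λ_{ℑ(k)} + 1 − Σ_{p=1}^{k-1} a_{ℑ(k),ℑ(p)} ι_p`. -/
noncomputable def iotaSeq (lam : ℕ → ℂ) (Im : ℕ → ℕ) : ℕ → ℂ
  | k =>
    lam (Im k) + 1 -
      ∑ p ∈ (Finset.Icc 1 (k - 1)).attach,
        cartan (Im k) (Im p.1) * iotaSeq lam Im p.1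
  decreasing_by
    have := Finset.mem_Icc.1 p.2; omega

section Helpers
variable (n : ℕ)

local notation "E" => Module.End ℂ (PolyA n)

lemma lieE_def (a b : E) : ⁅a, b⁆ = a * b - b * a := rfl

lemma lieE_add (a b c : E) : ⁅a, b + c⁆ = ⁅a, b⁆ + ⁅a, c⁆ := by
  simp only [Ring.lie_def, mul_add, add_mul]; abel

lemma lieE_add_left (a b c : E) : ⁅a + b, c⁆ = ⁅a, c⁆ + ⁅b, c⁆ := by
  simp only [Ring.lie_def, mul_add, add_mul]; abel

lemma lieE_sub_left (a b c : E) : ⁅a - b, c⁆ = ⁅a, c⁆ - ⁅b, c⁆ := by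
  simp only [Ring.lie_def, mul_sub, sub_mul]; abel

lemma lieE_mul_right (a b c : E) : ⁅a, b * c⁆ = ⁅a, b⁆ * c + b * ⁅a, c⁆ := by
  simp only [Ring.lie_def, mul_sub, sub_mul, mul_assoc]; abel

lemma lieE_mul_left (a b c : E) : ⁅a * b, c⁆ = a * ⁅b, c⁆ + ⁅a, c⁆ * b := by
  simp only [Ring.lie_def, mul_sub, sub_mul, mul_assoc]; abel

lemma lieE_sum_left {α : Type*} (s : Finset α) (f : α → E) (b : E) :
    ⁅∑ x ∈ s, f x, b⁆ = ∑ x ∈ s, ⁅f x, b⁆ := by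
  simp only [Ring.lie_def, Finset.sum_mul, Finset.mul_sum, Finset.sum_sub_distrib]

lemma lieE_sum_right {α : Type*} (s : Finset α) (f : α → E) (b : E) :
    ⁅b, ∑ x ∈ s, f x⁆ = ∑ x ∈ s, ⁅b, f x⁆ := by
  simp only [Ring.lie_def, Finset.sum_mul, Finset.mul_sum, Finset.sum_sub_distrib]

lemma pderiv_pderiv_comm {σ : Type*} (u v : σ) (p : MvPolynomial σ ℂ) :
    pderiv u (pderiv v p) = pderiv v (pderiv u p) := by
  classical
  induction p using MvPolynomial.induction_on with
  | C a => simp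
  | add p q hp hq => simp [hp, hq]
  | mul_X p i hp =>
    simp [pderiv_mul, hp, pderiv_X, Pi.single_apply]
    split_ifs <;> (try simp only [map_zero, add_zero, zero_add]) <;> ring

lemma mulX_eq_zero {i j : ℕ} (h : ¬ (1 ≤ j ∧ j < i ∧ i ≤ n)) : mulX n i j = 0 := by
  rw [mulX, dif_neg h]

lemma pd_eq_zero {i j : ℕ} (h : ¬ (1 ≤ j ∧ j < i ∧ i ≤ n)) : pd n i j = 0 := by
  rw [pd, dif_neg h]

lemma pd_mul_mulX (a b c d : ℕ) :
    pd n a b * mulX n c d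
      = mulX n c d * pd n a b
        + if a = c ∧ b = d ∧ 1 ≤ b ∧ b < a ∧ a ≤ n then 1 else 0 := by
  classical
  by_cases h1 : 1 ≤ b ∧ b < a ∧ a ≤ n
  · by_cases h2 : 1 ≤ d ∧ d < c ∧ c ≤ n
    · by_cases he : a = c ∧ b = d
      · obtain ⟨rfl, rfl⟩ := he
        rw [if_pos ⟨rfl, rfl, h1⟩, pd, mulX, dif_pos h1, dif_pos h1]
        apply LinearMap.ext; intro p
        simp only [Module.End.mul_apply, LinearMap.mulLeft_apply, LinearMap.add_apply,
          Derivation.coeFn_coe, Module.End.one_apply, pderiv_mul, pderiv_X_self, one_mul]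
        ring
      · rw [if_neg (by tauto), add_zero, pd, mulX, dif_pos h1, dif_pos h2]
        have hne : (⟨(a, b), h1⟩ : XIdx n) ≠ ⟨(c, d), h2⟩ := by
          simp only [ne_eq, Subtype.mk.injEq, Prod.mk.injEq]; tauto
        apply LinearMap.ext; intro p
        simp only [Module.End.mul_apply, LinearMap.mulLeft_apply,
          Derivation.coeFn_coe, pderiv_mul, pderiv_X, Pi.single_apply, if_neg hne.symm,
          C_0, zero_mul, zero_add]
    · rw [mulX_eq_zero n h2, mul_zero, zero_mul, zero_add]
      rw [if_neg]
      rintro ⟨rfl, rfl, h⟩; exact h2 h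
  · rw [pd_eq_zero n h1, zero_mul, mul_zero, zero_add]
    rw [if_neg]
    rintro ⟨_, _, h⟩; exact h1 h

end Helpers
section Helpers2
variable (n : ℕ)

local notation "E" => Module.End ℂ (PolyA n)

lemma mulX_comm (a b c d : ℕ) : mulX n a b * mulX n c d = mulX n c d * mulX n a b := by
  by_cases h1 : 1 ≤ b ∧ b < a ∧ a ≤ n
  · by_cases h2 : 1 ≤ d ∧ d < c ∧ c ≤ n
    · rw [mulX, mulX, dif_pos h1, dif_pos h2]
      apply LinearMap.ext; intro p
      simp only [Module.End.mul_apply, LinearMap.mulLeft_apply]; ring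
    · rw [mulX_eq_zero n h2, mul_zero, zero_mul]
  · rw [mulX_eq_zero n h1, mul_zero, zero_mul]

lemma pd_comm (a b c d : ℕ) : pd n a b * pd n c d = pd n c d * pd n a b := by
  by_cases h1 : 1 ≤ b ∧ b < a ∧ a ≤ n
  · by_cases h2 : 1 ≤ d ∧ d < c ∧ c ≤ n
    · rw [pd, pd, dif_pos h1, dif_pos h2]
      apply LinearMap.ext; intro p
      simp only [Module.End.mul_apply, Derivation.coeFn_coe]
      exact pderiv_pderiv_comm _ _ p
    · rw [pd_eq_zero n h2, mul_zero, zero_mul]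
  · rw [pd_eq_zero n h1, mul_zero, zero_mul]

lemma lie_pd_mulX (a b c d : ℕ) :
    ⁅pd n a b, mulX n c d⁆
      = if a = c ∧ b = d ∧ 1 ≤ b ∧ b < a ∧ a ≤ n then (1 : E) else 0 := by
  rw [Ring.lie_def, pd_mul_mulX]; abel

lemma lie_pd_XP (a b e f g h : ℕ) :
    ⁅pd n a b, mulX n e f * pd n g h⁆
      = if a = e ∧ b = f ∧ 1 ≤ b ∧ b < a ∧ a ≤ n then pd n g h else 0 := by
  rw [lieE_mul_right, lie_pd_mulX]
  have : ⁅pd n a b, pd n g h⁆ = 0 := by rw [Ring.lie_def, pd_comm, sub_self]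
  rw [this, mul_zero, add_zero, ite_mul, one_mul, zero_mul]

lemma lie_XP_X (a b c d e f : ℕ) :
    ⁅mulX n a b * pd n c d, mulX n e f⁆
      = if c = e ∧ d = f ∧ 1 ≤ d ∧ d < c ∧ c ≤ n then mulX n a b else 0 := by
  rw [lieE_mul_left, lie_pd_mulX]
  have : ⁅mulX n a b, mulX n e f⁆ = 0 := by rw [Ring.lie_def, mulX_comm, sub_self]
  rw [this, zero_mul, add_zero, mul_ite, mul_one, mul_zero]

lemma lie_XP_XP (a b c d e f g h : ℕ) :
    ⁅mulX n a b * pd n c d, mulX n e f * pd n g h⁆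
      = (if c = e ∧ d = f ∧ 1 ≤ d ∧ d < c ∧ c ≤ n then mulX n a b * pd n g h else 0)
        - (if g = a ∧ h = b ∧ 1 ≤ h ∧ h < g ∧ g ≤ n then mulX n e f * pd n c d else 0) := by
  rw [lieE_mul_right, lie_XP_X]
  have h2 : ⁅mulX n a b * pd n c d, pd n g h⁆
      = -((if g = a ∧ h = b ∧ 1 ≤ h ∧ h < g ∧ g ≤ n then (1 : E) else 0) * pd n c d) := by
    rw [lieE_mul_left]
    have hpp : ⁅pd n c d, pd n g h⁆ = 0 := by rw [Ring.lie_def, pd_comm, sub_self]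
    have hx : ⁅mulX n a b, pd n g h⁆ = -⁅pd n g h, mulX n a b⁆ := by rw [Ring.lie_def, Ring.lie_def, neg_sub]
    rw [hpp, mul_zero, zero_add, hx, lie_pd_mulX]
    split_ifs <;> (apply LinearMap.ext; intro p; simp)
  rw [h2]
  split_ifs <;> (apply LinearMap.ext; intro p; simp [sub_eq_add_neg])

end Helpers2
section Helpers3
variable (n : ℕ)

local notation "E" => Module.End ℂ (PolyA n)

lemma sum_ite_single {β : Type*} [AddCommMonoid β] (s : Finset ℕ) (a : ℕ) (ha : a ∈ s)
    (f : ℕ → β) (g : β) (h : ∀ p ∈ s, f p = if p = a then g else 0) :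
    ∑ p ∈ s, f p = g := by
  classical
  rw [Finset.sum_congr rfl h, Finset.sum_ite_eq' s a (fun _ => g), if_pos ha]

lemma sum_sum_ite {β : Type*} [AddCommMonoid β] (s t : Finset ℕ) (a b : ℕ)
    (ha : a ∈ s) (hb : b ∈ t) (f : ℕ → ℕ → β) (g : β)
    (h : ∀ p ∈ s, ∀ q ∈ t, f p q = if p = a ∧ q = b then g else 0) :
    ∑ p ∈ s, ∑ q ∈ t, f p q = g := by
  classical
  apply sum_ite_single s a ha
  intro p hp
  by_cases hpa : p = a
  · subst hpa
    rw [if_pos rfl]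
    apply sum_ite_single t b hb
    intro q hq
    rw [h p hp q hq]
    by_cases hqb : q = b
    · subst hqb; rw [if_pos rfl, if_pos ⟨rfl, rfl⟩]
    · rw [if_neg hqb, if_neg (by tauto)]
  · rw [if_neg hpa]
    apply Finset.sum_eq_zero
    intro q hq
    rw [h p hp q hq, if_neg (by tauto)]

variable {i j : ℕ}

section DL
variable (hi1 : 1 ≤ i) (hi2 : i + 1 ≤ n) (hj1 : 1 ≤ j) (hj2 : j + 1 ≤ n)
include hi1 hi2 hj1 hj2

lemma L1 : ⁅pd n (j+1) j, mulX n (i+1) i⁆ = if j = i then (1 : E) else 0 := by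
  rw [lie_pd_mulX]
  rcases eq_or_ne j i with rfl | hne
  · rw [if_pos ⟨rfl, rfl, hj1, by omega, hj2⟩, if_pos rfl]
  · rw [if_neg (by omega), if_neg hne]

omit hi1 hj1 hj2 in
lemma L2 : ⁅pd n (j+1) j, ∑ q ∈ Finset.Icc 1 (i-1), mulX n (i+1) q * pd n i q⁆ = 0 := by
  rw [lieE_sum_right]
  apply Finset.sum_eq_zero
  intro q hq
  have := Finset.mem_Icc.1 hq
  rw [lie_pd_XP, if_neg (by omega)]

lemma L3 : ⁅∑ p ∈ Finset.Icc (j+1) n, mulX n p j * pd n p j, mulX n (i+1) i⁆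
    = if j = i then mulX n (i+1) i else 0 := by
  rw [lieE_sum_left]
  simp only [lie_XP_X]
  rcases eq_or_ne j i with rfl | hne
  · rw [if_pos rfl]
    apply sum_ite_single _ (j+1) (Finset.mem_Icc.2 (by omega))
    intro p hp
    have := Finset.mem_Icc.1 hp
    by_cases hp' : p = j + 1
    · subst hp'; rw [if_pos ⟨rfl, rfl, hj1, by omega, hj2⟩, if_pos rfl]
    · rw [if_neg (by omega), if_neg hp']
  · rw [if_neg hne]
    apply Finset.sum_eq_zero
    intro p hp
    rw [if_neg (by omega)]

lemma L4 : ⁅∑ p ∈ Finset.Icc (j+1) n, mulX n p j * pd n p j,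
      ∑ q ∈ Finset.Icc 1 (i-1), mulX n (i+1) q * pd n i q⁆ = 0 := by
  rw [lieE_sum_left]
  simp only [lieE_sum_right, lie_XP_XP]
  simp only [Finset.sum_sub_distrib]
  rw [sub_eq_zero]
  by_cases hij : j < i
  · rw [sum_sum_ite _ _ (i+1) j (Finset.mem_Icc.2 (by omega)) (Finset.mem_Icc.2 (by omega))
      _ (mulX n (i+1) j * pd n i j)
      (by intro p hp q hq
          have h1 := Finset.mem_Icc.1 hp; have h2 := Finset.mem_Icc.1 hq
          by_cases hpq : p = i + 1 ∧ q = j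
          · obtain ⟨rfl, rfl⟩ := hpq
            rw [if_pos ⟨rfl, rfl, hj1, by omega, hi2⟩, if_pos ⟨rfl, rfl⟩]
          · rw [if_neg (by omega), if_neg hpq]),
      sum_sum_ite _ _ i j (Finset.mem_Icc.2 (by omega)) (Finset.mem_Icc.2 (by omega))
      _ (mulX n (i+1) j * pd n i j)
      (by intro p hp q hq
          have h1 := Finset.mem_Icc.1 hp; have h2 := Finset.mem_Icc.1 hq
          by_cases hpq : p = i ∧ q = j
          · obtain ⟨rfl, rfl⟩ := hpq
            rw [if_pos ⟨rfl, rfl, hj1, by omega, by omega⟩, if_pos ⟨rfl, rfl⟩]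
          · rw [if_neg (by omega), if_neg hpq])]
  · rw [Finset.sum_eq_zero, Finset.sum_eq_zero]
    · intro p hp
      apply Finset.sum_eq_zero
      intro q hq
      have h1 := Finset.mem_Icc.1 hp; have h2 := Finset.mem_Icc.1 hq
      rw [if_neg (by omega)]
    · intro p hp
      apply Finset.sum_eq_zero
      intro q hq
      have h1 := Finset.mem_Icc.1 hp; have h2 := Finset.mem_Icc.1 hq
      rw [if_neg (by omega)]

end DL
end Helpers3
section Helpers4
set_option linter.unusedSectionVars false
variable (n : ℕ)

local notation "E" => Module.End ℂ (PolyA n)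

lemma sum_sum_diag {β : Type*} [AddCommMonoid β] (s : Finset ℕ) (f : ℕ → ℕ → β) (g : ℕ → β)
    (h : ∀ p ∈ s, ∀ q ∈ s, f p q = if q = p then g p else 0) :
    ∑ p ∈ s, ∑ q ∈ s, f p q = ∑ p ∈ s, g p := by
  apply Finset.sum_congr rfl
  intro p hp
  apply sum_ite_single _ p hp
  intro q hq
  exact h p hp q hq

variable {i j : ℕ}
variable (hi1 : 1 ≤ i) (hi2 : i + 1 ≤ n) (hj1 : 1 ≤ j) (hj2 : j + 1 ≤ n)
include hi1 hi2 hj1 hj2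

lemma L5 : ⁅∑ p ∈ Finset.Icc (j+2) n, mulX n p (j+1) * pd n p (j+1), mulX n (i+1) i⁆
    = if i = j+1 then mulX n (i+1) i else 0 := by
  rw [lieE_sum_left]
  simp only [lie_XP_X]
  rcases eq_or_ne i (j+1) with rfl | hne
  · rw [if_pos rfl]
    apply sum_ite_single _ (j+1+1) (Finset.mem_Icc.2 (by omega))
    intro p hp
    have := Finset.mem_Icc.1 hp
    by_cases hp' : p = j+1+1
    · subst hp'; rw [if_pos ⟨rfl, rfl, by omega, by omega, by omega⟩, if_pos rfl]
    · rw [if_neg (by omega), if_neg hp']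
  · rw [if_neg hne]
    apply Finset.sum_eq_zero
    intro p hp
    rw [if_neg (by omega)]

lemma L6 : ⁅∑ p ∈ Finset.Icc (j+2) n, mulX n p (j+1) * pd n p (j+1),
      ∑ q ∈ Finset.Icc 1 (i-1), mulX n (i+1) q * pd n i q⁆ = 0 := by
  rw [lieE_sum_left]
  simp only [lieE_sum_right, lie_XP_XP]
  simp only [Finset.sum_sub_distrib]
  rw [sub_eq_zero]
  by_cases hij : j + 2 ≤ i
  · rw [sum_sum_ite _ _ (i+1) (j+1) (Finset.mem_Icc.2 (by omega)) (Finset.mem_Icc.2 (by omega))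
      _ (mulX n (i+1) (j+1) * pd n i (j+1))
      (by intro p hp q hq
          have h1 := Finset.mem_Icc.1 hp; have h2 := Finset.mem_Icc.1 hq
          by_cases hpq : p = i + 1 ∧ q = j + 1
          · obtain ⟨rfl, rfl⟩ := hpq
            rw [if_pos ⟨rfl, rfl, by omega, by omega, by omega⟩, if_pos ⟨rfl, rfl⟩]
          · rw [if_neg (by omega), if_neg hpq]),
      sum_sum_ite _ _ i (j+1) (Finset.mem_Icc.2 (by omega)) (Finset.mem_Icc.2 (by omega))
      _ (mulX n (i+1) (j+1) * pd n i (j+1))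
      (by intro p hp q hq
          have h1 := Finset.mem_Icc.1 hp; have h2 := Finset.mem_Icc.1 hq
          by_cases hpq : p = i ∧ q = j + 1
          · obtain ⟨rfl, rfl⟩ := hpq
            rw [if_pos ⟨rfl, rfl, by omega, by omega, by omega⟩, if_pos ⟨rfl, rfl⟩]
          · rw [if_neg (by omega), if_neg hpq])]
  · rw [Finset.sum_eq_zero, Finset.sum_eq_zero] <;>
    · intro p hp
      apply Finset.sum_eq_zero
      intro q hq
      have h1 := Finset.mem_Icc.1 hp; have h2 := Finset.mem_Icc.1 hq
      rw [if_neg (by omega)]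

lemma L7 : ⁅∑ p ∈ Finset.Icc 1 (j-1), mulX n j p * pd n (j+1) p, mulX n (i+1) i⁆ = 0 := by
  rw [lieE_sum_left]
  simp only [lie_XP_X]
  apply Finset.sum_eq_zero
  intro p hp
  have := Finset.mem_Icc.1 hp
  rw [if_neg (by omega)]

lemma L8 : ⁅∑ p ∈ Finset.Icc 1 (j-1), mulX n j p * pd n (j+1) p,
      ∑ q ∈ Finset.Icc 1 (i-1), mulX n (i+1) q * pd n i q⁆
    = if j = i then
        (∑ p ∈ Finset.Icc 1 (i-1), mulX n i p * pd n i p)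
          - ∑ p ∈ Finset.Icc 1 (i-1), mulX n (i+1) p * pd n (i+1) p
      else 0 := by
  rw [lieE_sum_left]
  simp only [lieE_sum_right, lie_XP_XP]
  simp only [Finset.sum_sub_distrib]
  rcases eq_or_ne j i with rfl | hne
  · rw [if_pos rfl]
    congr 1
    · apply sum_sum_diag
      intro p hp q hq
      have h1 := Finset.mem_Icc.1 hp; have h2 := Finset.mem_Icc.1 hq
      by_cases hpq : q = p
      · subst hpq
        rw [if_pos ⟨rfl, rfl, by omega, by omega, by omega⟩, if_pos rfl]
      · rw [if_neg (by omega), if_neg hpq]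
    · apply sum_sum_diag
      intro p hp q hq
      have h1 := Finset.mem_Icc.1 hp; have h2 := Finset.mem_Icc.1 hq
      by_cases hpq : q = p
      · subst hpq
        rw [if_pos ⟨rfl, rfl, by omega, by omega, by omega⟩, if_pos rfl]
      · rw [if_neg (by omega), if_neg hpq]
  · rw [if_neg hne, sub_eq_zero]
    rw [Finset.sum_eq_zero, Finset.sum_eq_zero] <;>
    · intro p hp
      apply Finset.sum_eq_zero
      intro q hq
      have h1 := Finset.mem_Icc.1 hp; have h2 := Finset.mem_Icc.1 hq
      rw [if_neg (by omega)]

lemma L9 : ⁅∑ p ∈ Finset.Icc (j+2) n, mulX n p (j+1) * pd n p j, mulX n (i+1) i⁆ = 0 := by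
  rw [lieE_sum_left]
  simp only [lie_XP_X]
  apply Finset.sum_eq_zero
  intro p hp
  have := Finset.mem_Icc.1 hp
  rw [if_neg (by omega)]

lemma L10 : ⁅∑ p ∈ Finset.Icc (j+2) n, mulX n p (j+1) * pd n p j,
      ∑ q ∈ Finset.Icc 1 (i-1), mulX n (i+1) q * pd n i q⁆
    = if i = j+1 then mulX n (i+1) i * pd n i j else 0 := by
  rw [lieE_sum_left]
  simp only [lieE_sum_right, lie_XP_XP]
  simp only [Finset.sum_sub_distrib]
  rcases eq_or_ne i (j+1) with rfl | hne
  · rw [if_pos rfl]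
    rw [sum_sum_ite _ _ (j+1+1) j (Finset.mem_Icc.2 (by omega)) (Finset.mem_Icc.2 (by omega))
      _ (mulX n (j+1+1) (j+1) * pd n (j+1) j)
      (by intro p hp q hq
          have h1 := Finset.mem_Icc.1 hp; have h2 := Finset.mem_Icc.1 hq
          by_cases hpq : p = j+1+1 ∧ q = j
          · obtain ⟨rfl, rfl⟩ := hpq
            rw [if_pos ⟨rfl, rfl, by omega, by omega, by omega⟩, if_pos ⟨rfl, rfl⟩]
          · rw [if_neg (by omega), if_neg hpq])]
    rw [Finset.sum_eq_zero, sub_zero]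
    intro p hp
    apply Finset.sum_eq_zero
    intro q hq
    have h1 := Finset.mem_Icc.1 hp; have h2 := Finset.mem_Icc.1 hq
    rw [if_neg (by omega)]
  · rw [if_neg hne, sub_eq_zero]
    by_cases hij : j + 2 ≤ i
    · rw [sum_sum_ite _ _ (i+1) j (Finset.mem_Icc.2 (by omega)) (Finset.mem_Icc.2 (by omega))
        _ (mulX n (i+1) (j+1) * pd n i j)
        (by intro p hp q hq
            have h1 := Finset.mem_Icc.1 hp; have h2 := Finset.mem_Icc.1 hq
            by_cases hpq : p = i+1 ∧ q = j
            · obtain ⟨rfl, rfl⟩ := hpq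
              rw [if_pos ⟨rfl, rfl, by omega, by omega, by omega⟩, if_pos ⟨rfl, rfl⟩]
            · rw [if_neg (by omega), if_neg hpq]),
        sum_sum_ite _ _ i (j+1) (Finset.mem_Icc.2 (by omega)) (Finset.mem_Icc.2 (by omega))
        _ (mulX n (i+1) (j+1) * pd n i j)
        (by intro p hp q hq
            have h1 := Finset.mem_Icc.1 hp; have h2 := Finset.mem_Icc.1 hq
            by_cases hpq : p = i ∧ q = j + 1
            · obtain ⟨rfl, rfl⟩ := hpq
              rw [if_pos ⟨rfl, rfl, by omega, by omega, by omega⟩, if_pos ⟨rfl, rfl⟩]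
            · rw [if_neg (by omega), if_neg hpq])]
    · rw [Finset.sum_eq_zero, Finset.sum_eq_zero] <;>
      · intro p hp
        apply Finset.sum_eq_zero
        intro q hq
        have h1 := Finset.mem_Icc.1 hp; have h2 := Finset.mem_Icc.1 hq
        rw [if_neg (by omega)]

end Helpers4
section Helpers5
set_option linter.unusedSectionVars false
variable (n : ℕ)

local notation "E" => Module.End ℂ (PolyA n)

lemma Icc_sum_split {β : Type*} [AddCommMonoid β] (a b : ℕ) (h : a ≤ b) (f : ℕ → β) :
    ∑ p ∈ Finset.Icc a b, f p = f a + ∑ p ∈ Finset.Icc (a+1) b, f p := by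
  have : Finset.Icc a b = insert a (Finset.Icc (a+1) b) := by
    ext x; simp only [Finset.mem_Icc, Finset.mem_insert]; omega
  rw [this, Finset.sum_insert (by simp only [Finset.mem_Icc]; omega)]

lemma smul_one_lieE (c : ℂ) (x : E) : ⁅c • (1 : E), x⁆ = 0 := by
  rw [Ring.lie_def, smul_mul_assoc, one_mul, mul_smul_comm, mul_one, sub_self]

variable {i j : ℕ} (lam : ℕ → ℂ)

lemma lie_d_eta_same (hj1 : 1 ≤ j) (hj2 : j + 1 ≤ n) :
    ⁅dOp n lam j, etaOp n j⁆ = zetaOp n lam j := by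
  have eP : ⁅pd n (j+1) j, etaOp n j⁆ = (1 : E) := by
    rw [etaOp, lieE_add, L1 n hj1 hj2 hj1 hj2, L2 n hj2, add_zero, if_pos rfl]
  have eA : ⁅∑ p ∈ Finset.Icc (j+1) n, mulX n p j * pd n p j, etaOp n j⁆
      = mulX n (j+1) j := by
    rw [etaOp, lieE_add, L3 n hj1 hj2 hj1 hj2, L4 n hj1 hj2 hj1 hj2, add_zero, if_pos rfl]
  have eB : ⁅∑ p ∈ Finset.Icc (j+2) n, mulX n p (j+1) * pd n p (j+1), etaOp n j⁆ = 0 := by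
    rw [etaOp, lieE_add, L5 n hj1 hj2 hj1 hj2, L6 n hj1 hj2 hj1 hj2, add_zero,
      if_neg (by omega)]
  have eC : ⁅∑ p ∈ Finset.Icc 1 (j-1), mulX n j p * pd n (j+1) p, etaOp n j⁆
      = (∑ p ∈ Finset.Icc 1 (j-1), mulX n j p * pd n j p)
          - ∑ p ∈ Finset.Icc 1 (j-1), mulX n (j+1) p * pd n (j+1) p := by
    rw [etaOp, lieE_add, L7 n hj1 hj2 hj1 hj2, L8 n hj1 hj2 hj1 hj2, zero_add, if_pos rfl]
  have eD : ⁅∑ p ∈ Finset.Icc (j+2) n, mulX n p (j+1) * pd n p j, etaOp n j⁆ = 0 := by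
    rw [etaOp, lieE_add, L9 n hj1 hj2 hj1 hj2, L10 n hj1 hj2 hj1 hj2, zero_add,
      if_neg (by omega)]
  rw [dOp, lieE_sub_left, lieE_add_left, lieE_mul_left, eP, eC, eD]
  rw [lieE_add_left, lieE_sub_left, smul_one_lieE, eA, eB]
  rw [mul_one, zetaOp]
  rw [Icc_sum_split (j+1) n hj2 (fun p => mulX n p j * pd n p j)]
  simp only [Finset.sum_sub_distrib]
  rw [two_smul]
  apply LinearMap.ext; intro p
  simp only [LinearMap.add_apply, LinearMap.sub_apply, LinearMap.smul_apply,
    LinearMap.zero_apply, Module.End.mul_apply, Module.End.one_apply, LinearMap.neg_apply,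
    map_zero, smul_zero, zero_add, add_zero, zero_mul, mul_zero]
  abel

lemma lie_d_eta_ne (hi1 : 1 ≤ i) (hi2 : i + 1 ≤ n) (hj1 : 1 ≤ j) (hj2 : j + 1 ≤ n)
    (hne : j ≠ i) : ⁅dOp n lam j, etaOp n i⁆ = 0 := by
  have eP : ⁅pd n (j+1) j, etaOp n i⁆ = 0 := by
    rw [etaOp, lieE_add, L1 n hi1 hi2 hj1 hj2, L2 n hi2, add_zero, if_neg hne]
  have eA : ⁅∑ p ∈ Finset.Icc (j+1) n, mulX n p j * pd n p j, etaOp n i⁆ = 0 := by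
    rw [etaOp, lieE_add, L3 n hi1 hi2 hj1 hj2, L4 n hi1 hi2 hj1 hj2, add_zero, if_neg hne]
  have eB : ⁅∑ p ∈ Finset.Icc (j+2) n, mulX n p (j+1) * pd n p (j+1), etaOp n i⁆
      = if i = j+1 then mulX n (i+1) i else 0 := by
    rw [etaOp, lieE_add, L5 n hi1 hi2 hj1 hj2, L6 n hi1 hi2 hj1 hj2, add_zero]
  have eC : ⁅∑ p ∈ Finset.Icc 1 (j-1), mulX n j p * pd n (j+1) p, etaOp n i⁆ = 0 := by
    rw [etaOp, lieE_add, L7 n hi1 hi2 hj1 hj2, L8 n hi1 hi2 hj1 hj2, zero_add, if_neg hne]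
  have eD : ⁅∑ p ∈ Finset.Icc (j+2) n, mulX n p (j+1) * pd n p j, etaOp n i⁆
      = if i = j+1 then mulX n (i+1) i * pd n i j else 0 := by
    rw [etaOp, lieE_add, L9 n hi1 hi2 hj1 hj2, L10 n hi1 hi2 hj1 hj2, zero_add]
  rw [dOp, lieE_sub_left, lieE_add_left, lieE_mul_left, eP, eC, eD]
  rw [lieE_add_left, lieE_sub_left, smul_one_lieE, eA, eB]
  rcases eq_or_ne i (j+1) with rfl | hij
  · rw [if_pos rfl, if_pos rfl]
    apply LinearMap.ext; intro p
    simp only [LinearMap.add_apply, LinearMap.sub_apply, LinearMap.smul_apply,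
      LinearMap.zero_apply, Module.End.mul_apply, LinearMap.neg_apply,
      map_zero, smul_zero, zero_add, add_zero, zero_mul, mul_zero, zero_sub, sub_zero]
    abel
  · rw [if_neg hij, if_neg hij]
    apply LinearMap.ext; intro p
    simp only [LinearMap.add_apply, LinearMap.sub_apply, LinearMap.smul_apply,
      LinearMap.zero_apply, Module.End.mul_apply, LinearMap.neg_apply,
      map_zero, smul_zero, zero_add, add_zero, zero_mul, mul_zero, zero_sub, sub_zero]

end Helpers5
section Helpers6
set_option linter.unusedSectionVars false
variable (n : ℕ)

local notation "E" => Module.End ℂ (PolyA n)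

lemma sum_sum_diag2 {β : Type*} [AddCommMonoid β] (s t : Finset ℕ) (hst : s ⊆ t)
    (f : ℕ → ℕ → β) (g : ℕ → β)
    (h : ∀ p ∈ s, ∀ q ∈ t, f p q = if q = p then g p else 0) :
    ∑ p ∈ s, ∑ q ∈ t, f p q = ∑ p ∈ s, g p := by
  apply Finset.sum_congr rfl
  intro p hp
  apply sum_ite_single t p (hst hp)
  intro q hq
  exact h p hp q hq

lemma sum_sum_diag3 {β : Type*} [AddCommMonoid β] (s t : Finset ℕ) (hts : t ⊆ s)
    (f : ℕ → ℕ → β) (g : ℕ → β)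
    (h : ∀ p ∈ s, ∀ q ∈ t, f p q = if p = q then g q else 0) :
    ∑ p ∈ s, ∑ q ∈ t, f p q = ∑ q ∈ t, g q := by
  rw [Finset.sum_comm]
  apply Finset.sum_congr rfl
  intro q hq
  apply sum_ite_single s q (hts hq)
  intro p hp
  exact h p hp q hq

variable {i j : ℕ}
variable (hi1 : 1 ≤ i) (hi2 : i + 1 ≤ n) (hj1 : 1 ≤ j) (hj2 : j + 1 ≤ n)
include hi1 hi2 hj1 hj2

lemma Z1 : ⁅∑ p ∈ Finset.Icc 1 (j-1), mulX n j p * pd n j p, mulX n (i+1) i⁆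
    = if j = i+1 then mulX n (i+1) i else 0 := by
  rw [lieE_sum_left]
  simp only [lie_XP_X]
  rcases eq_or_ne j (i+1) with rfl | hne
  · rw [if_pos rfl]
    apply sum_ite_single _ i (Finset.mem_Icc.2 (by omega))
    intro p hp
    have := Finset.mem_Icc.1 hp
    by_cases hp' : p = i
    · subst hp'; rw [if_pos ⟨rfl, rfl, by omega, by omega, by omega⟩, if_pos rfl]
    · rw [if_neg (by omega), if_neg hp']
  · rw [if_neg hne]
    apply Finset.sum_eq_zero
    intro p hp
    have := Finset.mem_Icc.1 hp
    rw [if_neg (by omega)]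

lemma Z2 : ⁅∑ p ∈ Finset.Icc 1 (j-1), mulX n j p * pd n j p,
      ∑ q ∈ Finset.Icc 1 (i-1), mulX n (i+1) q * pd n i q⁆
    = (if j = i+1 then ∑ q ∈ Finset.Icc 1 (i-1), mulX n (i+1) q * pd n i q else 0)
      - (if j = i then ∑ q ∈ Finset.Icc 1 (i-1), mulX n (i+1) q * pd n i q else 0) := by
  rw [lieE_sum_left]
  simp only [lieE_sum_right, lie_XP_XP]
  simp only [Finset.sum_sub_distrib]
  congr 1
  · rcases eq_or_ne j (i+1) with rfl | hne
    · rw [if_pos rfl]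
      have hsub : Finset.Icc 1 (i-1) ⊆ Finset.Icc 1 (i+1-1) := by
        intro x hx
        have := Finset.mem_Icc.1 hx
        exact Finset.mem_Icc.2 (by omega)
      apply sum_sum_diag3 _ _ hsub
      intro p hp q hq
      have h1 := Finset.mem_Icc.1 hp; have h2 := Finset.mem_Icc.1 hq
      by_cases hpq : p = q
      · subst hpq; rw [if_pos ⟨rfl, rfl, by omega, by omega, by omega⟩, if_pos rfl]
      · rw [if_neg (by omega), if_neg hpq]
    · rw [if_neg hne]
      apply Finset.sum_eq_zero; intro p hp
      apply Finset.sum_eq_zero; intro q hq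
      have h1 := Finset.mem_Icc.1 hp; have h2 := Finset.mem_Icc.1 hq
      rw [if_neg (by omega)]
  · rcases eq_or_ne j i with rfl | hne
    · rw [if_pos rfl]
      apply sum_sum_diag2 _ _ (le_refl _)
      intro p hp q hq
      have h1 := Finset.mem_Icc.1 hp; have h2 := Finset.mem_Icc.1 hq
      by_cases hpq : q = p
      · subst hpq; rw [if_pos ⟨rfl, rfl, by omega, by omega, by omega⟩, if_pos rfl]
      · rw [if_neg (by omega), if_neg hpq]
    · rw [if_neg hne]
      apply Finset.sum_eq_zero; intro p hp
      apply Finset.sum_eq_zero; intro q hq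
      have h1 := Finset.mem_Icc.1 hp; have h2 := Finset.mem_Icc.1 hq
      rw [if_neg (by omega)]

lemma Z3 : ⁅∑ p ∈ Finset.Icc 1 (j-1), mulX n (j+1) p * pd n (j+1) p, mulX n (i+1) i⁆
    = 0 := by
  rw [lieE_sum_left]
  simp only [lie_XP_X]
  apply Finset.sum_eq_zero
  intro p hp
  have := Finset.mem_Icc.1 hp
  rw [if_neg (by omega)]

lemma Z4 : ⁅∑ p ∈ Finset.Icc 1 (j-1), mulX n (j+1) p * pd n (j+1) p,
      ∑ q ∈ Finset.Icc 1 (i-1), mulX n (i+1) q * pd n i q⁆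
    = (if j = i then ∑ q ∈ Finset.Icc 1 (i-1), mulX n (i+1) q * pd n i q else 0)
      - (if i = j+1 then ∑ q ∈ Finset.Icc 1 (j-1), mulX n (i+1) q * pd n i q else 0) := by
  rw [lieE_sum_left]
  simp only [lieE_sum_right, lie_XP_XP]
  simp only [Finset.sum_sub_distrib]
  congr 1
  · rcases eq_or_ne j i with rfl | hne
    · rw [if_pos rfl]
      apply sum_sum_diag3 _ _ (le_refl _)
      intro p hp q hq
      have h1 := Finset.mem_Icc.1 hp; have h2 := Finset.mem_Icc.1 hq
      by_cases hpq : p = q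
      · subst hpq; rw [if_pos ⟨rfl, rfl, by omega, by omega, by omega⟩, if_pos rfl]
      · rw [if_neg (by omega), if_neg hpq]
    · rw [if_neg hne]
      apply Finset.sum_eq_zero; intro p hp
      apply Finset.sum_eq_zero; intro q hq
      have h1 := Finset.mem_Icc.1 hp; have h2 := Finset.mem_Icc.1 hq
      rw [if_neg (by omega)]
  · rcases eq_or_ne i (j+1) with rfl | hne
    · rw [if_pos rfl]
      have hsub : Finset.Icc 1 (j-1) ⊆ Finset.Icc 1 (j+1-1) := by
        intro x hx
        have := Finset.mem_Icc.1 hx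
        exact Finset.mem_Icc.2 (by omega)
      apply sum_sum_diag2 _ _ hsub
      intro p hp q hq
      have h1 := Finset.mem_Icc.1 hp; have h2 := Finset.mem_Icc.1 hq
      by_cases hpq : q = p
      · subst hpq; rw [if_pos ⟨rfl, rfl, by omega, by omega, by omega⟩, if_pos rfl]
      · rw [if_neg (by omega), if_neg hpq]
    · rw [if_neg hne]
      apply Finset.sum_eq_zero; intro p hp
      apply Finset.sum_eq_zero; intro q hq
      have h1 := Finset.mem_Icc.1 hp; have h2 := Finset.mem_Icc.1 hq
      rw [if_neg (by omega)]

lemma Z7 : ⁅∑ p ∈ Finset.Icc (j+2) n, mulX n p j * pd n p j, mulX n (i+1) i⁆ = 0 := by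
  rw [lieE_sum_left]
  simp only [lie_XP_X]
  apply Finset.sum_eq_zero
  intro p hp
  have := Finset.mem_Icc.1 hp
  rw [if_neg (by omega)]

lemma Z8 : ⁅∑ p ∈ Finset.Icc (j+2) n, mulX n p j * pd n p j,
      ∑ q ∈ Finset.Icc 1 (i-1), mulX n (i+1) q * pd n i q⁆
    = (if j+1 ≤ i then mulX n (i+1) j * pd n i j else 0)
      - (if j+2 ≤ i then mulX n (i+1) j * pd n i j else 0) := by
  rw [lieE_sum_left]
  simp only [lieE_sum_right, lie_XP_XP]
  simp only [Finset.sum_sub_distrib]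
  congr 1
  · by_cases hij : j + 1 ≤ i
    · rw [if_pos hij]
      apply sum_sum_ite _ _ (i+1) j (Finset.mem_Icc.2 (by omega)) (Finset.mem_Icc.2 (by omega))
      intro p hp q hq
      have h1 := Finset.mem_Icc.1 hp; have h2 := Finset.mem_Icc.1 hq
      by_cases hpq : p = i + 1 ∧ q = j
      · obtain ⟨rfl, rfl⟩ := hpq
        rw [if_pos ⟨rfl, rfl, by omega, by omega, by omega⟩, if_pos ⟨rfl, rfl⟩]
      · rw [if_neg (by omega), if_neg hpq]
    · rw [if_neg hij]
      apply Finset.sum_eq_zero; intro p hp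
      apply Finset.sum_eq_zero; intro q hq
      have h1 := Finset.mem_Icc.1 hp; have h2 := Finset.mem_Icc.1 hq
      rw [if_neg (by omega)]
  · by_cases hij : j + 2 ≤ i
    · rw [if_pos hij]
      apply sum_sum_ite _ _ i j (Finset.mem_Icc.2 (by omega)) (Finset.mem_Icc.2 (by omega))
      intro p hp q hq
      have h1 := Finset.mem_Icc.1 hp; have h2 := Finset.mem_Icc.1 hq
      by_cases hpq : p = i ∧ q = j
      · obtain ⟨rfl, rfl⟩ := hpq
        rw [if_pos ⟨rfl, rfl, by omega, by omega, by omega⟩, if_pos ⟨rfl, rfl⟩]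
      · rw [if_neg (by omega), if_neg hpq]
    · rw [if_neg hij]
      apply Finset.sum_eq_zero; intro p hp
      apply Finset.sum_eq_zero; intro q hq
      have h1 := Finset.mem_Icc.1 hp; have h2 := Finset.mem_Icc.1 hq
      rw [if_neg (by omega)]

lemma Z9 : ⁅mulX n (j+1) j * pd n (j+1) j, mulX n (i+1) i⁆
    = if j = i then mulX n (i+1) i else 0 := by
  rw [lie_XP_X]
  rcases eq_or_ne j i with rfl | hne
  · rw [if_pos ⟨rfl, rfl, by omega, by omega, by omega⟩, if_pos rfl]
  · rw [if_neg (by omega), if_neg hne]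

lemma Z10 : ⁅mulX n (j+1) j * pd n (j+1) j,
      ∑ q ∈ Finset.Icc 1 (i-1), mulX n (i+1) q * pd n i q⁆
    = 0 - (if i = j+1 then mulX n (i+1) j * pd n i j else 0) := by
  rw [lieE_sum_right]
  simp only [lie_XP_XP]
  simp only [Finset.sum_sub_distrib]
  congr 1
  · apply Finset.sum_eq_zero; intro q hq
    have := Finset.mem_Icc.1 hq
    rw [if_neg (by omega)]
  · rcases eq_or_ne i (j+1) with rfl | hne
    · rw [if_pos rfl]
      apply sum_ite_single _ j (Finset.mem_Icc.2 (by omega))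
      intro q hq
      have := Finset.mem_Icc.1 hq
      by_cases hq' : q = j
      · subst hq'; rw [if_pos ⟨rfl, rfl, by omega, by omega, by omega⟩, if_pos rfl]
      · rw [if_neg (by omega), if_neg hq']
    · rw [if_neg hne]
      apply Finset.sum_eq_zero; intro q hq
      have := Finset.mem_Icc.1 hq
      rw [if_neg (by omega)]

end Helpers6
section Helpers7
set_option linter.unusedSectionVars false
variable (n : ℕ)

local notation "E" => Module.End ℂ (PolyA n)

lemma smul_lieE (c : ℂ) (a b : E) : ⁅c • a, b⁆ = c • ⁅a, b⁆ := by
  rw [Ring.lie_def, Ring.lie_def, smul_mul_assoc, mul_smul_comm, smul_sub]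

lemma one_lieE (x : E) : ⁅(1 : E), x⁆ = 0 := by
  rw [Ring.lie_def, one_mul, mul_one, sub_self]

variable {i j : ℕ} (lam : ℕ → ℂ)

lemma lie_zeta_eta_same (hj1 : 1 ≤ j) (hj2 : j + 1 ≤ n) :
    ⁅zetaOp n lam j, etaOp n j⁆ = (-2 : ℂ) • etaOp n j := by
  rw [zetaOp, etaOp, Finset.sum_sub_distrib, Finset.sum_sub_distrib]
  simp only [lieE_add, lieE_sub_left, lieE_add_left, smul_lieE, one_lieE, smul_zero]
  rw [Z1 n hj1 hj2 hj1 hj2, Z2 n hj1 hj2 hj1 hj2, Z3 n hj1 hj2 hj1 hj2,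
    Z4 n hj1 hj2 hj1 hj2, L5 n hj1 hj2 hj1 hj2, L6 n hj1 hj2 hj1 hj2,
    Z7 n hj1 hj2 hj1 hj2, Z8 n hj1 hj2 hj1 hj2, Z9 n hj1 hj2 hj1 hj2,
    Z10 n hj1 hj2 hj1 hj2]
  simp only [eq_self_iff_true, if_true,
    eq_false (show ¬ j = j + 1 by omega), eq_false (show ¬ j + 1 ≤ j by omega),
    eq_false (show ¬ j + 2 ≤ j by omega), if_false]
  module

lemma lie_zeta_eta_adj1 (hi1 : 1 ≤ i) (hi3 : i + 1 + 1 ≤ n) :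
    ⁅zetaOp n lam (i+1), etaOp n i⁆ = etaOp n i := by
  have hi2 : i + 1 ≤ n := by omega
  rw [zetaOp, etaOp, Finset.sum_sub_distrib, Finset.sum_sub_distrib]
  simp only [lieE_add, lieE_sub_left, lieE_add_left, smul_lieE, one_lieE, smul_zero]
  rw [Z1 n hi1 hi2 (by omega) hi3, Z2 n hi1 hi2 (by omega) hi3, Z3 n hi1 hi2 (by omega) hi3,
    Z4 n hi1 hi2 (by omega) hi3, L5 n hi1 hi2 (by omega) hi3, L6 n hi1 hi2 (by omega) hi3,
    Z7 n hi1 hi2 (by omega) hi3, Z8 n hi1 hi2 (by omega) hi3, Z9 n hi1 hi2 (by omega) hi3,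
    Z10 n hi1 hi2 (by omega) hi3]
  simp only [eq_self_iff_true, if_true,
    eq_false (show ¬ i + 1 = i by omega), eq_false (show ¬ i = i + 1 + 1 by omega),
    eq_false (show ¬ i + 1 + 1 ≤ i by omega), eq_false (show ¬ i + 1 + 2 ≤ i by omega),
    if_false]
  module

lemma lie_zeta_eta_adj2 (hj1 : 1 ≤ j) (hj3 : j + 1 + 1 ≤ n) :
    ⁅zetaOp n lam j, etaOp n (j+1)⁆ = etaOp n (j+1) := by
  have hj2 : j + 1 ≤ n := by omega
  rw [zetaOp, etaOp, Finset.sum_sub_distrib, Finset.sum_sub_distrib]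
  simp only [lieE_add, lieE_sub_left, lieE_add_left, smul_lieE, one_lieE, smul_zero]
  rw [Z1 n (by omega) hj3 hj1 hj2, Z2 n (by omega) hj3 hj1 hj2, Z3 n (by omega) hj3 hj1 hj2,
    Z4 n (by omega) hj3 hj1 hj2, L5 n (by omega) hj3 hj1 hj2, L6 n (by omega) hj3 hj1 hj2,
    Z7 n (by omega) hj3 hj1 hj2, Z8 n (by omega) hj3 hj1 hj2, Z9 n (by omega) hj3 hj1 hj2,
    Z10 n (by omega) hj3 hj1 hj2]
  simp only [eq_self_iff_true, if_true,
    eq_false (show ¬ j = j + 1 + 1 by omega), eq_false (show ¬ j = j + 1 by omega),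
    eq_false (show ¬ j + 2 ≤ j + 1 by omega), eq_true (show j + 1 ≤ j + 1 by omega),
    if_false]
  simp only [Nat.add_sub_cancel]
  obtain ⟨j', rfl⟩ : ∃ j', j = j' + 1 := ⟨j - 1, by omega⟩
  rw [Finset.sum_Icc_succ_top (show 1 ≤ j' + 1 by omega), Nat.add_sub_cancel]
  module

lemma lie_zeta_eta_far (hi1 : 1 ≤ i) (hi2 : i + 1 ≤ n) (hj1 : 1 ≤ j) (hj2 : j + 1 ≤ n)
    (h1 : j ≠ i) (h2 : j ≠ i + 1) (h3 : i ≠ j + 1) :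
    ⁅zetaOp n lam j, etaOp n i⁆ = 0 := by
  rw [zetaOp, etaOp, Finset.sum_sub_distrib, Finset.sum_sub_distrib]
  simp only [lieE_add, lieE_sub_left, lieE_add_left, smul_lieE, one_lieE, smul_zero]
  rw [Z1 n hi1 hi2 hj1 hj2, Z2 n hi1 hi2 hj1 hj2, Z3 n hi1 hi2 hj1 hj2,
    Z4 n hi1 hi2 hj1 hj2, L5 n hi1 hi2 hj1 hj2, L6 n hi1 hi2 hj1 hj2,
    Z7 n hi1 hi2 hj1 hj2, Z8 n hi1 hi2 hj1 hj2, Z9 n hi1 hi2 hj1 hj2,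
    Z10 n hi1 hi2 hj1 hj2]
  simp only [eq_false h1, eq_false h2, eq_false h3, if_false,
    show (j + 2 ≤ i) = (j + 1 ≤ i) from propext (by omega)]
  module

end Helpers7
section Helpers8
set_option linter.unusedSectionVars false
variable (n : ℕ)

local notation "E" => Module.End ℂ (PolyA n)

lemma pd_apply_one (a b : ℕ) : pd n a b (1 : PolyA n) = 0 := by
  rw [pd]
  split
  · simp only [Derivation.coeFn_coe]
    rw [← MvPolynomial.C_1, pderiv_C]
  · rfl

lemma dOp_apply_one (lam : ℕ → ℂ) (j : ℕ) : dOp n lam j (1 : PolyA n) = 0 := by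
  rw [dOp]
  simp only [LinearMap.add_apply, LinearMap.sub_apply, Module.End.mul_apply,
    LinearMap.sum_apply, pd_apply_one, map_zero, Finset.sum_const_zero,
    add_zero, sub_zero, zero_add, zero_sub, neg_zero]

lemma zetaOp_apply_one (lam : ℕ → ℂ) (j : ℕ) :
    zetaOp n lam j (1 : PolyA n) = lam j • (1 : PolyA n) := by
  rw [zetaOp]
  simp only [LinearMap.add_apply, LinearMap.sub_apply, Module.End.mul_apply,
    LinearMap.sum_apply, LinearMap.smul_apply, Module.End.one_apply,
    pd_apply_one, map_zero, Finset.sum_const_zero, smul_zero,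
    add_zero, sub_zero, zero_add, zero_sub, neg_zero]

lemma weight_pow (h f : E) (a : ℂ) (hcomm : ⁅h, f⁆ = a • f)
    (v : PolyA n) (μ : ℂ) (hv : h v = μ • v) (c : ℕ) :
    h ((f ^ c) v) = (μ + c * a) • ((f ^ c) v) := by
  induction c with
  | zero => simpa using hv
  | succ c ih =>
    have hmul : h * f = f * h + a • f := by
      rw [Ring.lie_def] at hcomm
      rw [← hcomm]; abel
    rw [pow_succ', Module.End.mul_apply]
    calc h (f ((f ^ c) v)) = (h * f) ((f ^ c) v) := rfl
      _ = (f * h + a • f) ((f ^ c) v) := by rw [hmul]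
      _ = f (h ((f ^ c) v)) + a • f ((f ^ c) v) := by
          simp [LinearMap.add_apply, Module.End.mul_apply, LinearMap.smul_apply]
      _ = f ((μ + c * a) • (f ^ c) v) + a • f ((f ^ c) v) := by rw [ih]
      _ = (μ + (c + 1 : ℕ) * a) • f ((f ^ c) v) := by
          rw [map_smul, ← add_smul]
          push_cast
          congr 1
          ring

lemma commute_pow_apply (d f : E) (hc : ⁅d, f⁆ = 0) (c : ℕ) (v : PolyA n)
    (hv : d v = 0) : d ((f ^ c) v) = 0 := by
  induction c with
  | zero => simpa using hv
  | succ c ih =>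
    have hmul : d * f = f * d := by rwa [Ring.lie_def, sub_eq_zero] at hc
    rw [pow_succ', Module.End.mul_apply]
    calc d (f ((f ^ c) v)) = (d * f) ((f ^ c) v) := rfl
      _ = (f * d) ((f ^ c) v) := by rw [hmul]
      _ = f (d ((f ^ c) v)) := rfl
      _ = 0 := by rw [ih, map_zero]

lemma e_pow_formula (e f h : E) (hef : ⁅e, f⁆ = h) (hhf : ⁅h, f⁆ = (-2 : ℂ) • f)
    (v : PolyA n) (μ : ℂ) (he : e v = 0) (hh : h v = μ • v) (c : ℕ) :
    e ((f ^ c) v) = ((c : ℂ) * (μ - (c : ℂ) + 1)) • ((f ^ (c - 1)) v) := by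
  induction c with
  | zero => simpa using he
  | succ c ih =>
    have hmul : e * f = f * e + h := by
      rw [Ring.lie_def] at hef
      rw [← hef]; abel
    have hw := weight_pow n h f (-2 : ℂ) hhf v μ hh c
    rw [pow_succ', Module.End.mul_apply]
    have step : e (f ((f ^ c) v)) = f (e ((f ^ c) v)) + h ((f ^ c) v) := by
      calc e (f ((f ^ c) v)) = (e * f) ((f ^ c) v) := rfl
        _ = (f * e + h) ((f ^ c) v) := by rw [hmul]
        _ = f (e ((f ^ c) v)) + h ((f ^ c) v) := rfl
    rw [step, ih, hw, map_smul]
    rcases Nat.eq_zero_or_pos c with rfl | hcpos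
    · norm_num
    · have hc1 : c - 1 + 1 = c := by omega
      have : f ((f ^ (c - 1)) v) = (f ^ c) v := by
        rw [← Module.End.mul_apply, ← pow_succ', hc1]
      rw [this]
      rw [← add_smul]
      have hsucc : ((c : ℕ) + 1 : ℕ) - 1 = c := by omega
      rw [hsucc]
      congr 1
      push_cast
      ring

end Helpers8
section Helpers9
set_option linter.unusedSectionVars false
variable (n : ℕ)

lemma lie_zeta_eta_cartan (lam : ℕ → ℂ) {i j : ℕ} (hn : 2 ≤ n)
    (hi1 : 1 ≤ i) (hi2 : i ≤ n - 1) (hj1 : 1 ≤ j) (hj2 : j ≤ n - 1) :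
    ⁅zetaOp n lam j, etaOp n i⁆ = (-(cartan j i)) • etaOp n i := by
  have hi2' : i + 1 ≤ n := by omega
  have hj2' : j + 1 ≤ n := by omega
  rcases eq_or_ne j i with rfl | h1
  · rw [lie_zeta_eta_same n lam hj1 hj2', cartan, if_pos rfl]
    try norm_num
  rcases eq_or_ne j (i+1) with rfl | h2
  · rw [lie_zeta_eta_adj1 n lam hi1 (by omega), cartan, if_neg (by omega),
      if_pos (Or.inl rfl)]
    norm_num
  rcases eq_or_ne i (j+1) with rfl | h3
  · rw [lie_zeta_eta_adj2 n lam hj1 (by omega), cartan, if_neg (by omega),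
      if_pos (Or.inr rfl)]
    norm_num
  · rw [lie_zeta_eta_far n lam hi1 hi2' hj1 hj2' h1 h2 h3, cartan,
      if_neg h1, if_neg (by tauto), neg_zero, zero_smul]

lemma iota_eq (lam : ℕ → ℂ) (Im : ℕ → ℕ) (k : ℕ) :
    iotaSeq lam Im k
      = lam (Im k) + 1 - ∑ p ∈ Finset.Icc 1 (k-1), cartan (Im k) (Im p) * iotaSeq lam Im p := by
  rw [iotaSeq,
    Finset.sum_attach (Finset.Icc 1 (k-1)) (fun p => cartan (Im k) (Im p) * iotaSeq lam Im p)]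

end Helpers9

/-- Theorem 2.4: for a map `ℑ : {1,…,m} → {1,…,n−1}` with `ℑ(k) ≠ ℑ(k+1)` whose associated
exponents `ι_k` are all nonnegative integers `c k`, the element
`η[ℑ] = η_{ℑ(m)}^{ι_m} ∘ ⋯ ∘ η_{ℑ(1)}^{ι_1}(1)` (encoded by the iteration `w`) is a weighted
solution of the system: `d_j(η[ℑ]) = 0` and
`ζ_j(η[ℑ]) = (λ_j − Σ_{k=1}^m a_{j,ℑ(k)} ι_k)·η[ℑ]` for all `j = 1,…,n−1`. -/
theorem statement7 (n : ℕ) (hn : 2 ≤ n) (lam : ℕ → ℂ)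
    (m : ℕ) (hm : 1 ≤ m) (Im : ℕ → ℕ)
    (hIm : ∀ k, 1 ≤ k → k ≤ m → 1 ≤ Im k ∧ Im k ≤ n - 1)
    (hIm' : ∀ k, 1 ≤ k → k ≤ m - 1 → Im k ≠ Im (k + 1))
    (c : ℕ → ℕ) (hc : ∀ k, 1 ≤ k → k ≤ m → iotaSeq lam Im k = (c k : ℂ))
    (w : ℕ → PolyA n) (hw0 : w 0 = 1)
    (hw : ∀ k, k < m → w (k + 1) = (etaOp n (Im (k + 1)) ^ c (k + 1)) (w k)) :
    ∀ j, 1 ≤ j → j ≤ n - 1 →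
      dOp n lam j (w m) = 0 ∧
      zetaOp n lam j (w m)
        = (lam j - ∑ k ∈ Finset.Icc 1 m, cartan j (Im k) * iotaSeq lam Im k) • w m := by
  have hkey : ∀ k, k ≤ m → ∀ j, 1 ≤ j → j ≤ n - 1 →
      dOp n lam j (w k) = 0 ∧
      zetaOp n lam j (w k)
        = (lam j - ∑ p ∈ Finset.Icc 1 k, cartan j (Im p) * iotaSeq lam Im p) • w k := by
    intro k
    induction k with
    | zero =>
      intro _ j hj1 hj2
      rw [hw0, Finset.Icc_eq_empty (by omega), Finset.sum_empty, sub_zero]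
      exact ⟨dOp_apply_one n lam j, zetaOp_apply_one n lam j⟩
    | succ k ih =>
      intro hk j hj1 hj2
      have ihj := ih (by omega)
      set i := Im (k+1) with hidef
      have hiB := hIm (k+1) (by omega) (by omega)
      have hwk := hw k (by omega)
      have hiota : iotaSeq lam Im (k+1)
          = (lam i - ∑ p ∈ Finset.Icc 1 k, cartan i (Im p) * iotaSeq lam Im p) + 1 := by
        rw [iota_eq]
        simp only [Nat.add_sub_cancel, ← hidef]
        ring
      obtain ⟨hd0, hz0⟩ := ihj i hiB.1 hiB.2
      obtain ⟨hdj, hzj⟩ := ihj j hj1 hj2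
      have hcc : iotaSeq lam Im (k+1) = ((c (k+1) : ℂ)) := hc (k+1) (by omega) (by omega)
      constructor
      · rcases eq_or_ne j i with rfl | hne
        · rw [hwk]
          rw [e_pow_formula n (dOp n lam i) (etaOp n i) (zetaOp n lam i)
            (lie_d_eta_same n lam hiB.1 (by omega))
            (lie_zeta_eta_same n lam hiB.1 (by omega))
            (w k) _ hd0 hz0 (c (k+1))]
          have hzero : ((c (k+1) : ℂ))
              * ((lam i - ∑ p ∈ Finset.Icc 1 k, cartan i (Im p) * iotaSeq lam Im p)
                  - ((c (k+1) : ℂ)) + 1) = 0 := by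
            rw [← hcc, hiota]; ring
          rw [hzero, zero_smul]
        · rw [hwk]
          exact commute_pow_apply n _ _
            (lie_d_eta_ne n lam hiB.1 (by omega) hj1 (by omega) hne) _ _ hdj
      · rw [hwk]
        rw [weight_pow n (zetaOp n lam j) (etaOp n i) (-(cartan j i))
          (lie_zeta_eta_cartan n lam hn hiB.1 hiB.2 hj1 hj2) (w k) _ hzj (c (k+1))]
        congr 1
        rw [Finset.sum_Icc_succ_top (by omega : 1 ≤ k+1), ← hidef, hcc]
        ring
  intro j hj1 hj2
  exact hkey m le_rfl j hj1 hj2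
end

section
/- In the universal enveloping algebra U(sl(n,ℂ)), for every i with 1 ≤ i ≤ n−2 and all a, b ∈ ℕ one has ι(E_{i+1,i})^a · ι(E_{i+2,i+1})^{a+b} · ι(E_{i+1,i})^b = ι(E_{i+2,i+1})^b · ι(E_{i+1,i})^{a+b} · ι(E_{i+2,i+1})^a. -/
open LieAlgebra LieAlgebra.SpecialLinear

section Heisenberg
variable {R : Type*} [Ring R] (x y z : R)

private lemma lemA (hz : x*y = y*x + z) (hzy : z*y = y*z) :
    ∀ m : ℕ, x * y^m = y^m * x + m • (y^(m-1) * z) := by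
  intro m
  induction m with
  | zero => simp
  | succ m ih =>
    rw [pow_succ, ← mul_assoc, ih, add_mul, mul_assoc, hz, mul_add, ← mul_assoc, ← pow_succ]
    have h2 : m • (y^(m-1)*z) * y = m • (y^m * z) := by
      cases m with
      | zero => simp
      | succ m =>
        rw [smul_mul_assoc, mul_assoc, hzy, ← mul_assoc, ← pow_succ]
        norm_num
    rw [h2, Nat.add_sub_cancel, succ_nsmul]
    abel

private lemma lemB (hz : x*y = y*x + z) (hzx : z*x = x*z) (hzy : z*y = y*z) (p q : ℕ) :
    x^p * y^q = ∑ k ∈ Finset.range (p+1),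
      (k.factorial * p.choose k * q.choose k) • (y^(q-k) * x^(p-k) * z^k) := by
  have hczx : Commute z x := hzx
  induction p with
  | zero => simp
  | succ p ih =>
    have key : ∀ k ∈ Finset.range (p+1),
        (k.factorial * p.choose k * q.choose k) • (x * (y^(q-k) * x^(p-k) * z^k))
        = (k.factorial * p.choose k * q.choose k) • (y^(q-k) * x^(p+1-k) * z^k)
          + ((k.factorial * p.choose k * q.choose k) * (q-k)) •
              (y^(q-(k+1)) * x^(p-k) * z^(k+1)) := by
      intro k hk
      have hk' : k ≤ p := Nat.lt_succ_iff.mp (Finset.mem_range.mp hk)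
      have hA := lemA x y z hz hzy (q-k)
      have h1 : x * (y^(q-k) * x^(p-k) * z^k)
          = y^(q-k) * x^(p+1-k) * z^k + (q-k) • (y^(q-(k+1)) * x^(p-k) * z^(k+1)) := by
        have e1 : x * x^(p-k) = x^(p+1-k) := by
          rw [← pow_succ']
          congr 1
          omega
        have e2 : z * x^(p-k) = x^(p-k) * z := (hczx.pow_right (p-k)).eq
        calc x * (y^(q-k) * x^(p-k) * z^k)
            = (x * y^(q-k)) * (x^(p-k) * z^k) := by simp only [mul_assoc]
          _ = (y^(q-k)*x + (q-k)•(y^(q-k-1)*z)) * (x^(p-k) * z^k) := by rw [hA]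
          _ = y^(q-k) * ((x * x^(p-k)) * z^k)
              + (q-k) • (y^(q-k-1) * ((z * x^(p-k)) * z^k)) := by
              rw [add_mul, smul_mul_assoc]; simp only [mul_assoc]
          _ = y^(q-k) * (x^(p+1-k) * z^k)
              + (q-k) • (y^(q-(k+1)) * (x^(p-k) * (z * z^k))) := by
              rw [e1, e2, Nat.sub_sub]; simp only [mul_assoc]
          _ = y^(q-k) * x^(p+1-k) * z^k
              + (q-k) • (y^(q-(k+1)) * x^(p-k) * z^(k+1)) := by
              rw [← pow_succ']; simp only [mul_assoc]
      rw [h1, smul_add, smul_smul]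
    have coeff : ∀ k : ℕ, (k+1).factorial * (p+1).choose (k+1) * q.choose (k+1)
        = (k+1).factorial * p.choose (k+1) * q.choose (k+1)
          + k.factorial * p.choose k * q.choose k * (q-k) := by
      intro k
      have h2 : q.choose (k+1) * (k+1) = q.choose k * (q - k) := Nat.choose_succ_right_eq q k
      rw [Nat.choose_succ_succ, Nat.factorial_succ]
      calc (k+1) * k.factorial * (p.choose k + p.choose (k+1)) * q.choose (k+1)
          = (k+1) * k.factorial * p.choose (k+1) * q.choose (k+1)
            + k.factorial * p.choose k * (q.choose (k+1) * (k+1)) := by ring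
        _ = (k+1) * k.factorial * p.choose (k+1) * q.choose (k+1)
            + k.factorial * p.choose k * (q.choose k * (q-k)) := by rw [h2]
        _ = _ := by ring
    have c_last : (p+1).factorial * p.choose (p+1) * q.choose (p+1) = 0 := by
      simp [Nat.choose_eq_zero_of_lt (Nat.lt_succ_self p)]
    have hsplit : ∑ k ∈ Finset.range (p+1+1),
          (k.factorial * (p+1).choose k * q.choose k) • (y^(q-k) * x^(p+1-k) * z^k)
        = (∑ k ∈ Finset.range (p+1+1),
            (k.factorial * p.choose k * q.choose k) • (y^(q-k) * x^(p+1-k) * z^k))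
          + ∑ k ∈ Finset.range (p+1+1),
            (if k = 0 then 0 else
              (k-1).factorial * p.choose (k-1) * q.choose (k-1) * (q-(k-1)))
              • (y^(q-k) * x^(p+1-k) * z^k) := by
      rw [← Finset.sum_add_distrib]
      refine Finset.sum_congr rfl fun k _ => ?_
      rw [← add_smul]
      congr 1
      cases k with
      | zero => simp
      | succ k =>
        simp only [if_neg (Nat.succ_ne_zero k), Nat.add_sub_cancel]
        exact coeff k
    have h3 : ∑ k ∈ Finset.range (p+1+1),
          (k.factorial * p.choose k * q.choose k) • (y^(q-k) * x^(p+1-k) * z^k)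
        = ∑ k ∈ Finset.range (p+1),
          (k.factorial * p.choose k * q.choose k) • (y^(q-k) * x^(p+1-k) * z^k) := by
      rw [Finset.sum_range_succ, c_last]
      simp
    have h4 : ∑ k ∈ Finset.range (p+1+1),
          (if k = 0 then 0 else
            (k-1).factorial * p.choose (k-1) * q.choose (k-1) * (q-(k-1)))
            • (y^(q-k) * x^(p+1-k) * z^k)
        = ∑ k ∈ Finset.range (p+1),
          (k.factorial * p.choose k * q.choose k * (q-k))
            • (y^(q-(k+1)) * x^(p+1-(k+1)) * z^(k+1)) := by
      rw [Finset.sum_range_succ' _ (p+1)]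
      simp
    have h5 : ∀ k : ℕ, p+1-(k+1) = p-k := fun k => by omega
    rw [pow_succ', mul_assoc, ih, Finset.mul_sum]
    simp_rw [mul_smul_comm]
    rw [Finset.sum_congr rfl key, Finset.sum_add_distrib, hsplit, h3, h4]
    simp_rw [h5]

private lemma heisenberg_exchange (hz : x*y = y*x + z) (hzx : z*x = x*z) (hzy : z*y = y*z)
    (a b : ℕ) : x^a * y^(a+b) * x^b = y^b * x^(a+b) * y^a := by
  have hczx : Commute z x := hzx
  have hLHS : x^a * y^(a+b) * x^b
      = ∑ k ∈ Finset.range (a+1),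
          (k.factorial * a.choose k * (a+b).choose k) • (y^(a+b-k) * x^(a+b-k) * z^k) := by
    rw [lemB x y z hz hzx hzy a (a+b), Finset.sum_mul]
    refine Finset.sum_congr rfl fun k hk => ?_
    have hk' : k ≤ a := Nat.lt_succ_iff.mp (Finset.mem_range.mp hk)
    rw [smul_mul_assoc]
    congr 1
    have hc : z^k * x^b = x^b * z^k := ((hczx.pow_pow k b)).eq
    have e1 : x^(a-k) * x^b = x^(a+b-k) := by
      rw [← pow_add]
      congr 1
      omega
    calc y^(a+b-k) * x^(a-k) * z^k * x^b
        = y^(a+b-k) * (x^(a-k) * (z^k * x^b)) := by simp only [mul_assoc]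
      _ = y^(a+b-k) * (x^(a-k) * (x^b * z^k)) := by rw [hc]
      _ = y^(a+b-k) * ((x^(a-k) * x^b) * z^k) := by simp only [mul_assoc]
      _ = _ := by rw [e1, ← mul_assoc]
  have hRHS : y^b * x^(a+b) * y^a
      = ∑ k ∈ Finset.range (a+1),
          (k.factorial * (a+b).choose k * a.choose k) • (y^(a+b-k) * x^(a+b-k) * z^k) := by
    rw [mul_assoc, lemB x y z hz hzx hzy (a+b) a, Finset.mul_sum]
    rw [← Finset.sum_subset (Finset.range_subset_range.2 (by omega : a+1 ≤ a+b+1))]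
    · refine Finset.sum_congr rfl fun k hk => ?_
      have hk' : k ≤ a := Nat.lt_succ_iff.mp (Finset.mem_range.mp hk)
      rw [mul_smul_comm]
      congr 1
      have e1 : y^b * y^(a-k) = y^(a+b-k) := by
        rw [← pow_add]
        congr 1
        omega
      calc y^b * (y^(a-k) * x^(a+b-k) * z^k)
          = (y^b * y^(a-k)) * (x^(a+b-k) * z^k) := by simp only [mul_assoc]
        _ = _ := by rw [e1, ← mul_assoc]
    · intro k hk hk'
      have : a < k := by
        simp only [Finset.mem_range] at hk hk'
        omega
      rw [mul_smul_comm, Nat.choose_eq_zero_of_lt this]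
      simp
  rw [hLHS, hRHS]
  refine Finset.sum_congr rfl fun k _ => ?_
  congr 1
  ring
end Heisenberg

attribute [local instance 100] LieRing.ofAssociativeRing

private lemma serre_aux (n : ℕ) (hn : 3 ≤ n) (i : ℕ) (hi1 : 1 ≤ i) (hi2 : i ≤ n - 2) :
    ⁅slE n (i+1) i, ⁅slE n (i+1) i, slE n (i+2) (i+1)⁆⁆ = 0 ∧
    ⁅slE n (i+2) (i+1), ⁅slE n (i+1) i, slE n (i+2) (i+1)⁆⁆ = 0 := by
  have hi0 : i - 1 < n := by omega
  have hia : i < n := by omega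
  have hib : i + 1 < n := by omega
  set A : Fin n := ⟨i-1, hi0⟩ with hA
  set B : Fin n := ⟨i, hia⟩ with hB
  set C : Fin n := ⟨i+1, hib⟩ with hC
  have hfval : (slE n (i+1) i).val = Matrix.single B A 1 := by
    rw [slE, dif_pos (by omega)]
    rfl
  have hgval : (slE n (i+2) (i+1)).val = Matrix.single C B 1 := by
    rw [slE, dif_pos (by omega)]
    rfl
  have hAC : A ≠ C := Fin.ne_of_val_ne (show i - 1 ≠ i + 1 by omega)
  have hAB : A ≠ B := Fin.ne_of_val_ne (show i - 1 ≠ i by omega)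
  have hBC : B ≠ C := Fin.ne_of_val_ne (show i ≠ i + 1 by omega)
  have hw : (⁅slE n (i+1) i, slE n (i+2) (i+1)⁆ : sl (Fin n) ℂ).val
      = - Matrix.single C A 1 := by
    rw [LieSubalgebra.coe_bracket, Ring.lie_def, hfval, hgval,
      Matrix.single_mul_single_of_ne (c := (1:ℂ)) B A C hAC 1,
      Matrix.single_mul_single_same (c := (1:ℂ)) C B A 1]
    simp
  constructor
  · apply Subtype.ext
    rw [LieSubalgebra.coe_bracket, Ring.lie_def, hfval, hw]
    simp only [mul_neg, neg_mul, Matrix.single_mul_single_of_ne (c := (1:ℂ)) B A C hAC 1,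
      Matrix.single_mul_single_of_ne (c := (1:ℂ)) C A B hAB 1]
    simp
  · apply Subtype.ext
    rw [LieSubalgebra.coe_bracket, Ring.lie_def, hgval, hw]
    simp only [mul_neg, neg_mul, Matrix.single_mul_single_of_ne (c := (1:ℂ)) C B C hBC 1,
      Matrix.single_mul_single_of_ne (c := (1:ℂ)) C A C hAC 1]
    simp

/-- Exchange relation in `U(sl(n,ℂ))`: for `1 ≤ i ≤ n−2` and `a, b ∈ ℕ`,
`ι(E_{i+1,i})^a ι(E_{i+2,i+1})^{a+b} ι(E_{i+1,i})^b
  = ι(E_{i+2,i+1})^b ι(E_{i+1,i})^{a+b} ι(E_{i+2,i+1})^a`. -/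
theorem statement9 (n : ℕ) (hn : 3 ≤ n) (i : ℕ) (hi1 : 1 ≤ i) (hi2 : i ≤ n - 2) (a b : ℕ) :
    (UniversalEnvelopingAlgebra.ι ℂ (slE n (i+1) i)) ^ a
        * (UniversalEnvelopingAlgebra.ι ℂ (slE n (i+2) (i+1))) ^ (a + b)
        * (UniversalEnvelopingAlgebra.ι ℂ (slE n (i+1) i)) ^ b
      = (UniversalEnvelopingAlgebra.ι ℂ (slE n (i+2) (i+1))) ^ b
        * (UniversalEnvelopingAlgebra.ι ℂ (slE n (i+1) i)) ^ (a + b)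
        * (UniversalEnvelopingAlgebra.ι ℂ (slE n (i+2) (i+1))) ^ a := by
  obtain ⟨hs1, hs2⟩ := serre_aux n hn i hi1 hi2
  set f := slE n (i+1) i with hfdef
  set g := slE n (i+2) (i+1) with hgdef
  set x := UniversalEnvelopingAlgebra.ι ℂ f with hx
  set y := UniversalEnvelopingAlgebra.ι ℂ g with hy
  have h1 : x*y - y*x = UniversalEnvelopingAlgebra.ι ℂ ⁅f, g⁆ := by
    rw [LieHom.map_lie, Ring.lie_def]
  refine heisenberg_exchange x y (x*y - y*x) (by abel) ?_ ?_ a b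
  · have h2 : x * (x*y - y*x) - (x*y - y*x) * x = 0 := by
      rw [h1, ← Ring.lie_def, ← LieHom.map_lie, hs1, map_zero]
    have := sub_eq_zero.mp h2
    rw [this]
  · have h2 : y * (x*y - y*x) - (x*y - y*x) * y = 0 := by
      rw [h1, ← Ring.lie_def, ← LieHom.map_lie, hs2, map_zero]
    have := sub_eq_zero.mp h2
    rw [this]
end

section
/- Let n = 3, let λ_1, λ_2 be complex numbers with λ_1 + λ_2 + 1 ∈ ℕ, and set A = λ_1 + λ_2 + 2. Then the polynomial z = Σ_{p=0}^{A} (⟨λ_1+1⟩_p · ⟨A⟩_p / p!) · x_{2,1}^{A−p} · x_{3,1}^{p} · x_{3,2}^{A−p} in ℂ[x_{2,1}, x_{3,1}, x_{3,2}], where ⟨μ⟩_p = μ(μ−1)⋯(μ−p+1) and ⟨μ⟩_0 = 1, satisfies d_1(z) = 0 and d_2(z) = 0. -/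
open MvPolynomial

/-- The polynomial ring `ℂ[x_{2,1}, x_{3,1}, x_{3,2}]`, with variables indexed by
`0 ↦ x_{2,1}`, `1 ↦ x_{3,1}`, `2 ↦ x_{3,2}`. -/
abbrev A3 := MvPolynomial (Fin 3) ℂ

/-- Multiplication by `x_{2,1}`. -/
noncomputable def m21 : Module.End ℂ A3 := LinearMap.mulLeft ℂ (X 0)
/-- Multiplication by `x_{3,1}`. -/
noncomputable def m31 : Module.End ℂ A3 := LinearMap.mulLeft ℂ (X 1)
/-- Multiplication by `x_{3,2}`. -/
noncomputable def m32 : Module.End ℂ A3 := LinearMap.mulLeft ℂ (X 2)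
/-- `∂_{2,1}`. -/
noncomputable def p21 : Module.End ℂ A3 := (pderiv (0 : Fin 3)).toLinearMap
/-- `∂_{3,1}`. -/
noncomputable def p31 : Module.End ℂ A3 := (pderiv (1 : Fin 3)).toLinearMap
/-- `∂_{3,2}`. -/
noncomputable def p32 : Module.End ℂ A3 := (pderiv (2 : Fin 3)).toLinearMap

/-- `d_1 = (λ_1 − x_{2,1}∂_{2,1} − x_{3,1}∂_{3,1} + x_{3,2}∂_{3,2})∘∂_{2,1} − x_{3,2}∂_{3,1}`. -/
noncomputable def d1 (l1 : ℂ) : Module.End ℂ A3 :=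
  (l1 • (1 : Module.End ℂ A3) - m21 * p21 - m31 * p31 + m32 * p32) * p21 - m32 * p31

/-- `d_2 = (λ_2 − x_{3,2}∂_{3,2})∘∂_{3,2} + x_{2,1}∂_{3,1}`. -/
noncomputable def d2 (l2 : ℂ) : Module.End ℂ A3 :=
  (l2 • (1 : Module.End ℂ A3) - m32 * p32) * p32 + m21 * p31

/-- The falling factorial `⟨μ⟩_p = μ(μ−1)⋯(μ−p+1)`, with `⟨μ⟩_0 = 1`. -/
noncomputable def descFact (mu : ℂ) (p : ℕ) : ℂ := ∏ r ∈ Finset.range p, (mu - r)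

noncomputable def ee (a b c : ℕ) : Fin 3 →₀ ℕ :=
  Finsupp.single 0 a + Finsupp.single 1 b + Finsupp.single 2 c

lemma ee_apply0 (a b c : ℕ) : ee a b c 0 = a := by
  simp [ee, Finsupp.single_apply]
lemma ee_apply1 (a b c : ℕ) : ee a b c 1 = b := by
  simp [ee, Finsupp.single_apply]
lemma ee_apply2 (a b c : ℕ) : ee a b c 2 = c := by
  simp [ee, Finsupp.single_apply]

lemma ee_sub0 (a b c : ℕ) : ee (a+1) b c - Finsupp.single 0 1 = ee a b c := by
  ext i; fin_cases i <;>
    simp [Finsupp.tsub_apply, ee_apply0, ee_apply1, ee_apply2, Finsupp.single_apply]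
lemma ee_sub1 (a b c : ℕ) : ee a (b+1) c - Finsupp.single 1 1 = ee a b c := by
  ext i; fin_cases i <;>
    simp [Finsupp.tsub_apply, ee_apply0, ee_apply1, ee_apply2, Finsupp.single_apply]
lemma ee_sub2 (a b c : ℕ) : ee a b (c+1) - Finsupp.single 2 1 = ee a b c := by
  ext i; fin_cases i <;>
    simp [Finsupp.tsub_apply, ee_apply0, ee_apply1, ee_apply2, Finsupp.single_apply]

lemma ee_add0 (a b c : ℕ) : Finsupp.single (0 : Fin 3) 1 + ee a b c = ee (a+1) b c := by
  ext i; fin_cases i <;>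
    simp [ee_apply0, ee_apply1, ee_apply2, Finsupp.single_apply, Nat.add_comm]
lemma ee_add1 (a b c : ℕ) : Finsupp.single (1 : Fin 3) 1 + ee a b c = ee a (b+1) c := by
  ext i; fin_cases i <;>
    simp [ee_apply0, ee_apply1, ee_apply2, Finsupp.single_apply, Nat.add_comm]
lemma ee_add2 (a b c : ℕ) : Finsupp.single (2 : Fin 3) 1 + ee a b c = ee a b (c+1) := by
  ext i; fin_cases i <;>
    simp [ee_apply0, ee_apply1, ee_apply2, Finsupp.single_apply, Nat.add_comm]

lemma term_eq (a b c : ℕ) (k : ℂ) :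
    C k * (X 0 : A3) ^ a * X 1 ^ b * X 2 ^ c = monomial (ee a b c) k := by
  simp [X_pow_eq_monomial, C_mul_monomial, monomial_mul, ee]

-- basic operator actions
lemma p21_mono (s : Fin 3 →₀ ℕ) (k : ℂ) :
    p21 (monomial s k) = monomial (s - Finsupp.single 0 1) (k * s 0) := by
  simp [p21, pderiv_monomial]
lemma p31_mono (s : Fin 3 →₀ ℕ) (k : ℂ) :
    p31 (monomial s k) = monomial (s - Finsupp.single 1 1) (k * s 1) := by
  simp [p31, pderiv_monomial]
lemma p32_mono (s : Fin 3 →₀ ℕ) (k : ℂ) :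
    p32 (monomial s k) = monomial (s - Finsupp.single 2 1) (k * s 2) := by
  simp [p32, pderiv_monomial]
lemma m21_mono (s : Fin 3 →₀ ℕ) (k : ℂ) :
    m21 (monomial s k) = monomial (Finsupp.single 0 1 + s) k := by
  simp [m21, LinearMap.mulLeft_apply, X, monomial_mul]
lemma m31_mono (s : Fin 3 →₀ ℕ) (k : ℂ) :
    m31 (monomial s k) = monomial (Finsupp.single 1 1 + s) k := by
  simp [m31, LinearMap.mulLeft_apply, X, monomial_mul]
lemma m32_mono (s : Fin 3 →₀ ℕ) (k : ℂ) :
    m32 (monomial s k) = monomial (Finsupp.single 2 1 + s) k := by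
  simp [m32, LinearMap.mulLeft_apply, X, monomial_mul]

lemma n21 (s : Fin 3 →₀ ℕ) (k : ℂ) :
    m21 (p21 (monomial s k)) = monomial s (k * s 0) := by
  rcases Nat.eq_zero_or_pos (s 0) with h | h
  · simp [p21_mono, m21_mono, h]
  · rw [p21_mono, m21_mono, add_tsub_cancel_of_le (Finsupp.single_le_iff.2 h)]
lemma n31 (s : Fin 3 →₀ ℕ) (k : ℂ) :
    m31 (p31 (monomial s k)) = monomial s (k * s 1) := by
  rcases Nat.eq_zero_or_pos (s 1) with h | h
  · simp [p31_mono, m31_mono, h]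
  · rw [p31_mono, m31_mono, add_tsub_cancel_of_le (Finsupp.single_le_iff.2 h)]
lemma n32 (s : Fin 3 →₀ ℕ) (k : ℂ) :
    m32 (p32 (monomial s k)) = monomial s (k * s 2) := by
  rcases Nat.eq_zero_or_pos (s 2) with h | h
  · simp [p32_mono, m32_mono, h]
  · rw [p32_mono, m32_mono, add_tsub_cancel_of_le (Finsupp.single_le_iff.2 h)]

noncomputable def T1 (l1 : ℂ) : Module.End ℂ A3 :=
  (l1 • (1 : Module.End ℂ A3) - m21 * p21 - m31 * p31 + m32 * p32) * p21
noncomputable def T2 : Module.End ℂ A3 := m32 * p31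
noncomputable def T3 (l2 : ℂ) : Module.End ℂ A3 :=
  (l2 • (1 : Module.End ℂ A3) - m32 * p32) * p32
noncomputable def T4 : Module.End ℂ A3 := m21 * p31

lemma T1_mono (l1 : ℂ) (a b c : ℕ) (k : ℂ) :
    T1 l1 (monomial (ee (a+1) b c) k) =
      monomial (ee a b c) (k * (a+1) * (l1 - a - b + c)) := by
  have h1 : p21 (monomial (ee (a+1) b c) k) = monomial (ee a b c) (k * (a+1)) := by
    rw [p21_mono, ee_sub0, ee_apply0]; push_cast; ring_nf
  rw [T1, Module.End.mul_apply, h1]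
  simp only [LinearMap.add_apply, LinearMap.sub_apply, LinearMap.smul_apply,
    Module.End.one_apply, Module.End.mul_apply, n21, n31, n32,
    ee_apply0, ee_apply1, ee_apply2]
  rw [show k * (↑a+1) * (l1 - ↑a - ↑b + ↑c)
      = (l1 • (k * (↑a+1)) - k * (↑a+1) * ↑a - k * (↑a+1) * ↑b) + k * (↑a+1) * ↑c by
    simp only [smul_eq_mul]; ring, map_add, map_sub, map_sub, smul_monomial]

lemma T1_mono_zero (l1 : ℂ) (b c : ℕ) (k : ℂ) :
    T1 l1 (monomial (ee 0 b c) k) = 0 := by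
  have h1 : p21 (monomial (ee 0 b c) k) = 0 := by
    rw [p21_mono, ee_apply0]; simp
  rw [T1, Module.End.mul_apply, h1]; simp

lemma T2_mono (a b c : ℕ) (k : ℂ) :
    T2 (monomial (ee a (b+1) c) k) = monomial (ee a b (c+1)) (k * (b+1)) := by
  rw [T2, Module.End.mul_apply, p31_mono, ee_sub1, ee_apply1, m32_mono, ee_add2]
  push_cast; ring_nf

lemma T2_mono_zero (a c : ℕ) (k : ℂ) : T2 (monomial (ee a 0 c) k) = 0 := by
  rw [T2, Module.End.mul_apply, p31_mono, ee_apply1]; simp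

lemma T3_mono (l2 : ℂ) (a b c : ℕ) (k : ℂ) :
    T3 l2 (monomial (ee a b (c+1)) k) =
      monomial (ee a b c) (k * (c+1) * (l2 - c)) := by
  have h1 : p32 (monomial (ee a b (c+1)) k) = monomial (ee a b c) (k * (c+1)) := by
    rw [p32_mono, ee_sub2, ee_apply2]; push_cast; ring_nf
  rw [T3, Module.End.mul_apply, h1]
  simp only [LinearMap.sub_apply, LinearMap.smul_apply, Module.End.one_apply,
    Module.End.mul_apply, n32, ee_apply2]
  rw [show k * (↑c+1) * (l2 - ↑c) = l2 • (k * (↑c+1)) - k * (↑c+1) * ↑c by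
    simp only [smul_eq_mul]; ring, map_sub, smul_monomial]

lemma T3_mono_zero (l2 : ℂ) (a b : ℕ) (k : ℂ) : T3 l2 (monomial (ee a b 0) k) = 0 := by
  have h1 : p32 (monomial (ee a b 0) k) = 0 := by rw [p32_mono, ee_apply2]; simp
  rw [T3, Module.End.mul_apply, h1]; simp

lemma T4_mono (a b c : ℕ) (k : ℂ) :
    T4 (monomial (ee a (b+1) c) k) = monomial (ee (a+1) b c) (k * (b+1)) := by
  rw [T4, Module.End.mul_apply, p31_mono, ee_sub1, ee_apply1, m21_mono, ee_add0]
  push_cast; ring_nf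

lemma T4_mono_zero (a c : ℕ) (k : ℂ) : T4 (monomial (ee a 0 c) k) = 0 := by
  rw [T4, Module.End.mul_apply, p31_mono, ee_apply1]; simp


noncomputable def cc (l1 l2 : ℂ) (p : ℕ) : ℂ :=
  descFact (l1 + 1) p * descFact (l1 + l2 + 2) p / (Nat.factorial p : ℂ)

lemma cc_succ (l1 l2 : ℂ) (p : ℕ) :
    cc l1 l2 (p+1) * ((p : ℂ) + 1) = cc l1 l2 p * (l1 + 1 - p) * (l1 + l2 + 2 - p) := by
  unfold cc descFact
  rw [Finset.prod_range_succ, Finset.prod_range_succ, Nat.factorial_succ]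
  have h0 : (Nat.factorial p : ℂ) ≠ 0 := Nat.cast_ne_zero.2 (Nat.factorial_ne_zero p)
  have h1 : ((p : ℂ) + 1) ≠ 0 := Nat.cast_add_one_ne_zero p
  field_simp
  push_cast; ring

/-- For `λ_1 + λ_2 + 1 ∈ ℕ` and `A = λ_1 + λ_2 + 2`, the polynomial
`z = Σ_{p=0}^{A} (⟨λ_1+1⟩_p ⟨A⟩_p / p!) x_{2,1}^{A−p} x_{3,1}^p x_{3,2}^{A−p}`
satisfies `d_1(z) = 0` and `d_2(z) = 0`. -/
theorem statement17 (l1 l2 : ℂ) (N : ℕ) (h : l1 + l2 + 1 = (N : ℂ)) :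
    d1 l1 (∑ p ∈ Finset.range (N + 1 + 1),
        C (descFact (l1 + 1) p * descFact (l1 + l2 + 2) p / (Nat.factorial p : ℂ)) *
          X 0 ^ (N + 1 - p) * X 1 ^ p * X 2 ^ (N + 1 - p)) = 0 ∧
    d2 l2 (∑ p ∈ Finset.range (N + 1 + 1),
        C (descFact (l1 + 1) p * descFact (l1 + l2 + 2) p / (Nat.factorial p : ℂ)) *
          X 0 ^ (N + 1 - p) * X 1 ^ p * X 2 ^ (N + 1 - p)) = 0 := by

  have hz : (∑ p ∈ Finset.range (N + 1 + 1),
      C (descFact (l1 + 1) p * descFact (l1 + l2 + 2) p / (Nat.factorial p : ℂ)) *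
        X 0 ^ (N + 1 - p) * X 1 ^ p * X 2 ^ (N + 1 - p)) =
      ∑ p ∈ Finset.range (N + 1 + 1), monomial (ee (N+1-p) p (N+1-p)) (cc l1 l2 p) := by
    refine Finset.sum_congr rfl fun p _ => ?_
    rw [term_eq]; rfl
  rw [hz]
  constructor
  · have hd : d1 l1 = T1 l1 - T2 := rfl
    rw [hd, LinearMap.sub_apply, map_sum, map_sum, Finset.sum_range_succ,
      Finset.sum_range_succ' (fun p => T2 (monomial (ee (N+1-p) p (N+1-p)) (cc l1 l2 p))) (N+1)]
    simp only [Nat.sub_self]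
    rw [T1_mono_zero, T2_mono_zero, add_zero, add_zero, ← Finset.sum_sub_distrib]
    refine Finset.sum_eq_zero fun p hp => ?_
    have hpN : p ≤ N := Nat.lt_succ_iff.mp (Finset.mem_range.mp hp)
    have e1 : N + 1 - p = (N - p) + 1 := by omega
    have e2 : N + 1 - (p + 1) = N - p := by omega
    rw [e1, e2, T1_mono, T2_mono, ← map_sub]
    have hc : ((N - p : ℕ) : ℂ) = (N : ℂ) - p := by
      push_cast [Nat.cast_sub hpN]; ring
    convert map_zero (monomial (ee (N-p) p (N-p+1)) : ℂ →ₗ[ℂ] A3) using 2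
    rw [sub_eq_zero, cc_succ]
    push_cast [hc]
    rw [← h]; ring
  · have hd : d2 l2 = T3 l2 + T4 := rfl
    rw [hd, LinearMap.add_apply, map_sum, map_sum, Finset.sum_range_succ,
      Finset.sum_range_succ' (fun p => T4 (monomial (ee (N+1-p) p (N+1-p)) (cc l1 l2 p))) (N+1)]
    simp only [Nat.sub_self]
    rw [T3_mono_zero, T4_mono_zero, add_zero, add_zero, ← Finset.sum_add_distrib]
    refine Finset.sum_eq_zero fun p hp => ?_
    have hpN : p ≤ N := Nat.lt_succ_iff.mp (Finset.mem_range.mp hp)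
    have e1 : N + 1 - p = (N - p) + 1 := by omega
    have e2 : N + 1 - (p + 1) = N - p := by omega
    rw [e1, e2, T3_mono, T4_mono, ← map_add]
    have hc : ((N - p : ℕ) : ℂ) = (N : ℂ) - p := by
      push_cast [Nat.cast_sub hpN]; ring
    convert map_zero (monomial (ee (N-p+1) p (N-p)) : ℂ →ₗ[ℂ] A3) using 2
    rw [cc_succ]
    push_cast [hc]
    rw [← h]; ring
end
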